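/- arXiv:2107.03083 — 8 statements merged into one kernel-verified Lean document; each statement's English description precedes it below -/
import Mathlib

section
/- Let N be a network with binary collision profile, T ≥ D*, and let (A_0, A_1, ..., A_k) be a closed path (A_k = A_0) in the scheduling graph (M_T, E_T). Then the schedule S with period kT defined by S[T, i mod k] = A_{i mod k} for all i ∈ ℤ is collision free. -/
/-- Collision freeness for a binary collision profile `I : L → Set L`. -/
def CollisionFreeB {L : Type*} (I : L → Set L) (D : L → L → ℤ)
    (S : L → ℤ → Bool) : Prop :=
  ∀ l t, S l t = true → ∀ l' ∈ I l, S l' (t + D l l') = false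

/-- `blk S T k` is the `|L| × T` block of `S` with columns `kT, …, (k+1)T − 1`. -/
def blk {L : Type*} (S : L → ℤ → Bool) (T : ℕ) (k : ℤ) : L → Fin T → Bool :=
  fun l j => S l (k * T + (j : ℕ))

/-- Vertex set of the scheduling graph (binary collision profile). -/
def MTb {L : Type*} (I : L → Set L) (D : L → L → ℤ) (T : ℕ) :
    Set (L → Fin T → Bool) :=
  {A | ∃ S, CollisionFreeB I D S ∧ A = blk S T 0}

/-- Edge set of the scheduling graph (binary collision profile). -/
def ETb {L : Type*} (I : L → Set L) (D : L → L → ℤ) (T : ℕ) :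
    Set ((L → Fin T → Bool) × (L → Fin T → Bool)) :=
  {p | ∃ S, CollisionFreeB I D S ∧ p.1 = blk S T 0 ∧ p.2 = blk S T 1}

lemma blk_eval {L : Type*} (S : L → ℤ → Bool) (T : ℕ) (q : ℤ) (l : L) (x : ℤ)
    (h0 : 0 ≤ x) (hx : x.toNat < T) :
    blk S T q l ⟨x.toNat, hx⟩ = S l (q * T + x) := by
  show S l (q * T + (x.toNat : ℤ)) = S l (q * T + x)
  rw [Int.toNat_of_nonneg h0]

/-- binary collision profile, `T ≥ D*`; the periodic schedule of
period `kT` obtained from a closed path `(A_0, …, A_k)` (with `A_k = A_0`) in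
the scheduling graph `(M_T, E_T)` is collision free. -/
theorem stmt_5 {L : Type*} (I : L → Set L) (D : L → L → ℤ)
    (T k : ℕ) (hT : 1 ≤ T) (hk : 1 ≤ k)
    (hDT : ∀ l, ∀ l' ∈ I l, |D l l'| ≤ (T : ℤ))
    (A : ℕ → (L → Fin T → Bool))
    (hpath : ∀ i < k, A i ∈ MTb I D T ∧ (A i, A (i + 1)) ∈ ETb I D T)
    (hclosed : A k = A 0)
    (S : L → ℤ → Bool)
    (hper : ∀ l t, S l (t + (k * T : ℕ)) = S l t)
    (hblk : ∀ i < k, blk S T (i : ℤ) = A i) :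
    CollisionFreeB I D S := by
  have hk0 : (0:ℤ) < k := by exact_mod_cast hk
  have hT0 : (0:ℤ) < T := by exact_mod_cast hT
  have hper' : ∀ l (t : ℤ), S l (t + (k:ℤ) * T) = S l t := by
    intro l t
    have := hper l t
    push_cast at this
    exact this
  have Sper : ∀ (l : L) (t n : ℤ), S l (t + n * ((k:ℤ) * T)) = S l t := by
    intro l t n
    induction n using Int.induction_on with
    | zero => simp
    | succ m ih =>
        rw [show t + ((m:ℤ)+1) * ((k:ℤ)*T) = (t + m * ((k:ℤ)*T)) + (k:ℤ)*T by ring,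
          hper', ih]
    | pred m ih =>
        calc S l (t + (-(m:ℤ)-1) * ((k:ℤ)*T))
            = S l (t + (-(m:ℤ)-1) * ((k:ℤ)*T) + (k:ℤ)*T) := (hper' _ _).symm
          _ = S l t := by
              rw [show t + (-(m:ℤ)-1) * ((k:ℤ)*T) + (k:ℤ)*T = t + (-(m:ℤ)) * ((k:ℤ)*T) by ring]
              exact ih
  have blkA : ∀ q : ℤ, blk S T q = A ((q % k).toNat) := by
    intro q
    have h0 : 0 ≤ q % k := Int.emod_nonneg q hk0.ne'
    have h1 : q % k < k := Int.emod_lt_of_pos q hk0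
    have hlt : (q % k).toNat < k := by omega
    funext l x
    have e : q * (T:ℤ) + (x:ℕ) = ((q % k) * T + (x:ℕ)) + (q / k) * ((k:ℤ)*T) := by
      linear_combination (-(T:ℤ)) * (Int.mul_ediv_add_emod q k)
    calc blk S T q l x
        = S l (q * T + (x:ℕ)) := rfl
      _ = S l (((q % k) * T + (x:ℕ)) + (q / k) * ((k:ℤ)*T)) := by rw [e]
      _ = S l ((q % k) * T + (x:ℕ)) := Sper _ _ _
      _ = blk S T (q % k) l x := rfl
      _ = blk S T (((q % k).toNat : ℕ) : ℤ) l x := by rw [Int.toNat_of_nonneg h0]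
      _ = A ((q % k).toNat) l x := by rw [hblk _ hlt]
  have Asucc : ∀ q : ℤ, A (((q+1) % k).toNat) = A ((q % k).toNat + 1) := by
    intro q
    have h0 : 0 ≤ q % k := Int.emod_nonneg q hk0.ne'
    have h1 : q % k < k := Int.emod_lt_of_pos q hk0
    have e1 : (q+1) % k = (q % k + 1) % k := by
      conv_lhs => rw [show q + 1 = (q % k + 1) + (k:ℤ) * (q / k) by
        linear_combination (Int.mul_ediv_add_emod q k).symm]
      rw [Int.add_mul_emod_self_left]
    by_cases hcase : q % k + 1 < k
    · have hh2 : (q % k + 1) % k = q % k + 1 := Int.emod_eq_of_lt (by omega) hcase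
      have hh3 : (q % k + 1).toNat = (q % k).toNat + 1 := by omega
      rw [e1, hh2, hh3]
    · have hq : q % k + 1 = (k:ℤ) := by omega
      rw [e1, hq, Int.emod_self]
      have h2 : (q % k).toNat + 1 = k := by omega
      rw [h2, hclosed]
      simp
  intro l t hSt l' hl'
  have habs := abs_le.mp (hDT l l' hl')
  set r := t % (T:ℤ) with hrdef
  set m := t / (T:ℤ) with hmdef
  have hr0 : 0 ≤ r := Int.emod_nonneg t hT0.ne'
  have hrT : r < T := Int.emod_lt_of_pos t hT0
  have htm : (T:ℤ) * m + r = t := Int.mul_ediv_add_emod t T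
  have hfin : r.toNat < T := by omega
  have e1 : blk S T m l ⟨r.toNat, hfin⟩ = S l (m * T + r) := blk_eval S T m l r hr0 hfin
  by_cases hc : 0 ≤ r + D l l'
  · -- use edge out of block m
    have hm0 : 0 ≤ m % k := Int.emod_nonneg m hk0.ne'
    have hm1 : m % k < k := Int.emod_lt_of_pos m hk0
    have hi : ((m % k).toNat) < k := by omega
    obtain ⟨S', hS', h2, h3⟩ := (hpath ((m % k).toNat) hi).2
    have hA1 : A ((m % k).toNat) = blk S' T 0 := h2
    have hA2 : A ((m % k).toNat + 1) = blk S' T 1 := h3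
    have e2 : blk S' T 0 l ⟨r.toNat, hfin⟩ = S' l (0 * T + r) := blk_eval S' T 0 l r hr0 hfin
    have hS'l : S' l r = true := by
      rw [show r = 0 * (T:ℤ) + r by ring, ← e2, ← hA1, ← blkA m, e1,
        show m * (T:ℤ) + r = t by linarith, hSt]
    have hfalse : S' l' (r + D l l') = false := hS' l r hS'l l' hl'
    by_cases hc2 : r + D l l' < T
    · have hfin2 : (r + D l l').toNat < T := by omega
      have f1 : blk S T m l' ⟨(r + D l l').toNat, hfin2⟩ = S l' (m * T + (r + D l l')) :=
        blk_eval S T m l' _ hc hfin2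
      have f2 : blk S' T 0 l' ⟨(r + D l l').toNat, hfin2⟩ = S' l' (0 * T + (r + D l l')) :=
        blk_eval S' T 0 l' _ hc hfin2
      rw [show t + D l l' = m * (T:ℤ) + (r + D l l') by linarith, ← f1, blkA m, hA1, f2,
        show 0 * (T:ℤ) + (r + D l l') = r + D l l' by ring]
      exact hfalse
    · have hfin3 : (r + D l l' - T).toNat < T := by omega
      have f3 : blk S T (m+1) l' ⟨(r + D l l' - T).toNat, hfin3⟩
          = S l' ((m+1) * T + (r + D l l' - T)) := blk_eval S T (m+1) l' _ (by omega) hfin3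
      have f4 : blk S' T 1 l' ⟨(r + D l l' - T).toNat, hfin3⟩
          = S' l' (1 * T + (r + D l l' - T)) := blk_eval S' T 1 l' _ (by omega) hfin3
      rw [show t + D l l' = (m+1) * (T:ℤ) + (r + D l l' - T) by linarith, ← f3, blkA (m+1),
        Asucc m, hA2, f4, show 1 * (T:ℤ) + (r + D l l' - T) = r + D l l' by ring]
      exact hfalse
  · -- use edge into block m
    have hm0 : 0 ≤ (m-1) % k := Int.emod_nonneg (m-1) hk0.ne'
    have hm1 : (m-1) % k < k := Int.emod_lt_of_pos (m-1) hk0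
    have hj : (((m-1) % k).toNat) < k := by omega
    obtain ⟨S', hS', h2, h3⟩ := (hpath (((m-1) % k).toNat) hj).2
    have hA1 : A (((m-1) % k).toNat) = blk S' T 0 := h2
    have hA2 : A (((m-1) % k).toNat + 1) = blk S' T 1 := h3
    have hAs : A ((m % k).toNat) = A (((m-1) % k).toNat + 1) := by
      have := Asucc (m-1)
      rw [show m - 1 + 1 = m by ring] at this
      exact this
    have g1 : blk S' T 1 l ⟨r.toNat, hfin⟩ = S' l (1 * T + r) := blk_eval S' T 1 l r hr0 hfin
    have hS'l : S' l (1 * T + r) = true := by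
      rw [← g1, ← hA2, ← hAs, ← blkA m, e1, show m * (T:ℤ) + r = t by linarith, hSt]
    have hfalse : S' l' (1 * T + r + D l l') = false := hS' l _ hS'l l' hl'
    have hfin4 : ((T:ℤ) + r + D l l').toNat < T := by omega
    have g2 : blk S T (m-1) l' ⟨((T:ℤ) + r + D l l').toNat, hfin4⟩
        = S l' ((m-1) * T + ((T:ℤ) + r + D l l')) := blk_eval S T (m-1) l' _ (by omega) hfin4
    have g3 : blk S' T 0 l' ⟨((T:ℤ) + r + D l l').toNat, hfin4⟩
        = S' l' (0 * T + ((T:ℤ) + r + D l l')) := blk_eval S' T 0 l' _ (by omega) hfin4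
    rw [show t + D l l' = (m-1) * (T:ℤ) + ((T:ℤ) + r + D l l') by linarith, ← g2,
      blkA (m-1), hA1, g3, show 0 * (T:ℤ) + ((T:ℤ) + r + D l l') = 1 * T + r + D l l' by ring]
    exact hfalse
end

section
/- The rate region R^N of a network N is a convex subset of ℝ^L. -/
open scoped Classical

open Filter

/-- Average over `t = 0, …, T−1` of the indicator that link `l` is active and
collision free at time `t` under schedule `S`. -/
noncomputable def rateAvg {L : Type*} (I : L → Set (Set L)) (D : L → L → ℤ)
    (S : L → ℤ → Bool) (l : L) (T : ℕ) : ℝ :=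
  (∑ t ∈ Finset.range T,
      if S l (t : ℤ) = true ∧ ∀ φ ∈ I l, ∃ l' ∈ φ, S l' ((t : ℤ) + D l l') = false
      then (1 : ℝ) else 0) / T

/-- A rate vector `R` is achievable if for every `ε > 0` there is a schedule
whose rate vector exists and dominates `R − ε` componentwise. -/
noncomputable def Achievable {L : Type*} (I : L → Set (Set L)) (D : L → L → ℤ)
    (R : L → ℝ) : Prop :=
  ∀ ε : ℝ, 0 < ε → ∃ (S : L → ℤ → Bool) (r : L → ℝ),
    (∀ l, Tendsto (rateAvg I D S l) atTop (nhds (r l))) ∧ ∀ l, R l - ε ≤ r l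

namespace StmtSix

variable {L : Type*}

/-- The single-time indicator appearing in `rateAvg`. -/
noncomputable def ind (I : L → Set (Set L)) (D : L → L → ℤ) (S : L → ℤ → Bool)
    (l : L) (t : ℤ) : ℝ :=
  if S l t = true ∧ ∀ φ ∈ I l, ∃ l' ∈ φ, S l' (t + D l l') = false
  then (1 : ℝ) else 0

lemma ind_nonneg (I : L → Set (Set L)) (D : L → L → ℤ) (S : L → ℤ → Bool)
    (l : L) (t : ℤ) : 0 ≤ ind I D S l t := by
  unfold ind; split_ifs <;> norm_num

lemma ind_le_one (I : L → Set (Set L)) (D : L → L → ℤ) (S : L → ℤ → Bool)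
    (l : L) (t : ℤ) : ind I D S l t ≤ 1 := by
  unfold ind; split_ifs <;> norm_num

lemma rateAvg_eq (I : L → Set (Set L)) (D : L → L → ℤ) (S : L → ℤ → Bool)
    (l : L) (T : ℕ) :
    rateAvg I D S l T = (∑ t ∈ Finset.range T, ind I D S l (t : ℤ)) / T := rfl

/-- `sfun K = 1 + 2 + ⋯ + K`. -/
def sfun : ℕ → ℕ
  | 0 => 0
  | K + 1 => sfun K + (K + 1)

lemma sfun_cast (K : ℕ) : (sfun K : ℝ) = K * (K + 1) / 2 := by
  induction K with
  | zero => simp [sfun]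
  | succ K ih => simp only [sfun]; push_cast [ih]; ring

lemma le_sfun (K : ℕ) : K ≤ sfun K := by
  induction K with
  | zero => simp [sfun]
  | succ K ih => simp only [sfun]; omega

noncomputable def pblk (a : ℝ) (k : ℕ) : ℕ := ⌈a * (k + 1)⌉₊

noncomputable def qblk (a : ℝ) (k : ℕ) : ℕ := (k + 1) - pblk a k

lemma pblk_le {a : ℝ} (ha1 : a ≤ 1) (k : ℕ) : pblk a k ≤ k + 1 := by
  apply Nat.ceil_le.mpr
  have : (0:ℝ) ≤ (k+1 : ℕ) := by positivity
  push_cast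
  nlinarith

lemma pq {a : ℝ} (ha1 : a ≤ 1) (k : ℕ) : pblk a k + qblk a k = k + 1 := by
  have := pblk_le ha1 k; unfold qblk; omega

noncomputable def Pc (a : ℝ) : ℕ → ℕ
  | 0 => 0
  | K + 1 => Pc a K + pblk a K

noncomputable def Qc (a : ℝ) : ℕ → ℕ
  | 0 => 0
  | K + 1 => Qc a K + qblk a K

lemma Pc_bounds {a : ℝ} (ha0 : 0 ≤ a) (K : ℕ) :
    a * sfun K ≤ Pc a K ∧ (Pc a K : ℝ) ≤ a * sfun K + K := by
  induction K with
  | zero => simp [Pc, sfun]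
  | succ K ih =>
    have h1 : a * (K + 1) ≤ pblk a K := by
      have := Nat.le_ceil (a * (K + 1 : ℕ)); push_cast at this ⊢; convert this using 2 <;> push_cast <;> rfl
    have h2 : (pblk a K : ℝ) < a * (K + 1) + 1 := by
      have h0 : 0 ≤ a * ((K:ℝ) + 1) := by positivity
      have := Nat.ceil_lt_add_one h0
      unfold pblk
      convert this using 3 <;> push_cast <;> ring
    constructor
    · simp only [Pc, sfun]; push_cast; nlinarith [ih.1]
    · simp only [Pc, sfun]; push_cast; nlinarith [ih.2]

lemma PQ {a : ℝ} (ha1 : a ≤ 1) (K : ℕ) : Pc a K + Qc a K = sfun K := by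
  induction K with
  | zero => simp [Pc, Qc, sfun]
  | succ K ih => simp only [Pc, Qc, sfun]; have := pq ha1 K; omega

/-- Start position of block `k`; block `k` has length `3W + (k+1)`. -/
def Bst (W : ℕ) : ℕ → ℕ
  | 0 => 0
  | K + 1 => Bst W K + (3 * W + (K + 1))

lemma Bst_eq (W K : ℕ) : Bst W K = 3 * W * K + sfun K := by
  induction K with
  | zero => simp [Bst, sfun]
  | succ K ih => simp only [Bst, sfun]; rw [ih]; ring

lemma le_Bst (W K : ℕ) : K ≤ Bst W K := by
  rw [Bst_eq]; have := le_sfun K; omega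

lemma Bst_mono (W : ℕ) : Monotone (Bst W) := by
  apply monotone_nat_of_le_succ
  intro K; simp only [Bst]; omega

/-- Index of the block containing time `n`. -/
noncomputable def blk (W n : ℕ) : ℕ :=
  Nat.find (⟨n, lt_of_lt_of_le (Nat.lt_succ_self n) (le_Bst W (n+1))⟩ : ∃ k, n < Bst W (k + 1))

lemma blk_lt (W n : ℕ) : n < Bst W (blk W n + 1) :=
  Nat.find_spec (⟨n, lt_of_lt_of_le (Nat.lt_succ_self n) (le_Bst W (n+1))⟩ : ∃ k, n < Bst W (k + 1))

lemma blk_le (W n : ℕ) : Bst W (blk W n) ≤ n := by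
  rcases h : blk W n with _ | m
  · simp [Bst]
  · have hm : m < blk W n := by omega
    have := Nat.find_min (⟨n, lt_of_lt_of_le (Nat.lt_succ_self n) (le_Bst W (n+1))⟩ :
      ∃ k, n < Bst W (k + 1)) hm
    omega

lemma le_blk {W k n : ℕ} (h : Bst W k ≤ n) : k ≤ blk W n := by
  by_contra hc
  push_neg at hc
  have h2 : blk W n + 1 ≤ k := hc
  have := Bst_mono W h2
  have := blk_lt W n
  omega

lemma blk_eq {W k n : ℕ} (h1 : Bst W k ≤ n) (h2 : n < Bst W (k + 1)) : blk W n = k := by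
  have ha : k ≤ blk W n := le_blk h1
  have hb : blk W n ≤ k := Nat.find_le h2
  omega

lemma blk_tendsto (W : ℕ) : Tendsto (blk W) atTop atTop := by
  apply tendsto_atTop_atTop.mpr
  intro k
  exact ⟨Bst W k, fun T hT => le_blk hT⟩

/-- The time-shared schedule. -/
noncomputable def mix (W : ℕ) (a : ℝ) (S1 S2 : L → ℤ → Bool) (l : L) (t : ℤ) : Bool :=
  if 0 ≤ t then
    (let n := t.toNat
     let k := blk W n
     let o := n - Bst W k
     if W ≤ o ∧ o < W + pblk a k then S1 l ((Pc a k + (o - W) : ℕ) : ℤ)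
     else if 2 * W + pblk a k ≤ o ∧ o < 2 * W + (k + 1) then
       S2 l ((Qc a k + (o - (2 * W + pblk a k)) : ℕ) : ℤ)
     else false)
  else false

lemma mix_eval (W : ℕ) (a : ℝ) (S1 S2 : L → ℤ → Bool) (l : L) (k o : ℕ)
    (ho : o < 3 * W + (k + 1)) :
    mix W a S1 S2 l ((Bst W k + o : ℕ) : ℤ) =
      if W ≤ o ∧ o < W + pblk a k then S1 l ((Pc a k + (o - W) : ℕ) : ℤ)
      else if 2 * W + pblk a k ≤ o ∧ o < 2 * W + (k + 1) then
        S2 l ((Qc a k + (o - (2 * W + pblk a k)) : ℕ) : ℤ)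
      else false := by
  have hnn : (0:ℤ) ≤ ((Bst W k + o : ℕ) : ℤ) := by positivity
  have hblk : blk W (Bst W k + o) = k := by
    apply blk_eq (by omega)
    have : Bst W (k+1) = Bst W k + (3*W + (k+1)) := rfl
    omega
  simp only [mix, if_pos hnn, Int.toNat_natCast, hblk, Nat.add_sub_cancel_left]

section Lookup

variable (I : L → Set (Set L)) (D : L → L → ℤ) (W : ℕ) (a : ℝ) (S1 S2 : L → ℤ → Bool)

lemma mix_mid1 (ha1 : a ≤ 1) {k j : ℕ} (hj : j < pblk a k) (l : L) :
    mix W a S1 S2 l ((Bst W k + (W + j) : ℕ) : ℤ) = S1 l ((Pc a k + j : ℕ) : ℤ) := by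
  have hp := pblk_le ha1 k
  rw [mix_eval W a S1 S2 l k (W + j) (by omega)]
  rw [if_pos ⟨by omega, by omega⟩]
  congr 2
  omega

lemma mix_mid2 (ha1 : a ≤ 1) {k j : ℕ} (hj : j < qblk a k) (l : L) :
    mix W a S1 S2 l ((Bst W k + (2 * W + pblk a k + j) : ℕ) : ℤ) =
      S2 l ((Qc a k + j : ℕ) : ℤ) := by
  have hp := pq ha1 k
  rw [mix_eval W a S1 S2 l k (2 * W + pblk a k + j) (by omega)]
  rw [if_neg (by omega), if_pos ⟨by omega, by omega⟩]
  congr 2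
  omega

lemma mix_dead (ha1 : a ≤ 1) {k o : ℕ} (ho : o < 3 * W + (k + 1))
    (hdead : o < W ∨ (W + pblk a k ≤ o ∧ o < 2 * W + pblk a k) ∨ 2 * W + (k + 1) ≤ o)
    (l : L) :
    mix W a S1 S2 l ((Bst W k + o : ℕ) : ℤ) = false := by
  have hp := pblk_le ha1 k
  rw [mix_eval W a S1 S2 l k o ho, if_neg (by omega), if_neg (by omega)]

lemma mix_lookup1 (ha1 : a ≤ 1) {k j : ℕ} (hj : j < pblk a k) (d : ℤ) (hd : d.natAbs ≤ W)
    (l' : L) :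
    mix W a S1 S2 l' (((Bst W k + (W + j) : ℕ) : ℤ) + d) =
      if 0 ≤ (j : ℤ) + d ∧ (j : ℤ) + d < pblk a k
      then S1 l' ((Pc a k : ℤ) + ((j : ℤ) + d)) else false := by
  have hp := pblk_le ha1 k
  obtain ⟨o', ho1, ho2⟩ : ∃ o' : ℕ, ((Bst W k + (W + j) : ℕ) : ℤ) + d = ((Bst W k + o' : ℕ) : ℤ)
      ∧ (o' : ℤ) = W + j + d := by
    refine ⟨(W + j + d : ℤ).toNat, ?_, ?_⟩ <;> push_cast <;> omega
  rw [ho1, mix_eval W a S1 S2 l' k o' (by omega)]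
  by_cases hin : 0 ≤ (j : ℤ) + d ∧ (j : ℤ) + d < pblk a k
  · rw [if_pos hin, if_pos (by omega)]
    congr 1
    push_cast
    omega
  · rw [if_neg hin, if_neg (by omega), if_neg (by omega)]

lemma mix_lookup2 (ha1 : a ≤ 1) {k j : ℕ} (hj : j < qblk a k) (d : ℤ) (hd : d.natAbs ≤ W)
    (l' : L) :
    mix W a S1 S2 l' (((Bst W k + (2 * W + pblk a k + j) : ℕ) : ℤ) + d) =
      if 0 ≤ (j : ℤ) + d ∧ (j : ℤ) + d < qblk a k
      then S2 l' ((Qc a k : ℤ) + ((j : ℤ) + d)) else false := by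
  have hp := pq ha1 k
  obtain ⟨o', ho1, ho2⟩ : ∃ o' : ℕ,
      ((Bst W k + (2 * W + pblk a k + j) : ℕ) : ℤ) + d = ((Bst W k + o' : ℕ) : ℤ)
      ∧ (o' : ℤ) = 2 * W + pblk a k + j + d := by
    refine ⟨(2 * (W:ℤ) + pblk a k + j + d).toNat, ?_, ?_⟩ <;> push_cast <;> omega
  rw [ho1, mix_eval W a S1 S2 l' k o' (by omega)]
  by_cases hin : 0 ≤ (j : ℤ) + d ∧ (j : ℤ) + d < qblk a k
  · rw [if_neg (by omega), if_pos (by omega)]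
    rw [if_pos hin]
    congr 1
    push_cast
    omega
  · rw [if_neg (by omega), if_neg (by omega), if_neg hin]

end Lookup

section IndComp

variable (I : L → Set (Set L)) (D : L → L → ℤ) (W : ℕ) (a : ℝ) (S1 S2 : L → ℤ → Bool)

lemma ind_mix_dead (ha1 : a ≤ 1) {k o : ℕ} (ho : o < 3 * W + (k + 1))
    (hdead : o < W ∨ (W + pblk a k ≤ o ∧ o < 2 * W + pblk a k) ∨ 2 * W + (k + 1) ≤ o)
    (l : L) :
    ind I D (mix W a S1 S2) l ((Bst W k + o : ℕ) : ℤ) = 0 := by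
  unfold ind
  rw [if_neg]
  rintro ⟨h1, -⟩
  rw [mix_dead W a S1 S2 ha1 ho hdead l] at h1
  exact Bool.false_ne_true h1

lemma ind_ge1 (hW : ∀ l l', (D l l').natAbs ≤ W) (ha1 : a ≤ 1)
    {k j : ℕ} (hj : j < pblk a k) (l : L) :
    ind I D S1 l ((Pc a k + j : ℕ) : ℤ) ≤
      ind I D (mix W a S1 S2) l ((Bst W k + (W + j) : ℕ) : ℤ) := by
  by_cases hc : S1 l ((Pc a k + j : ℕ) : ℤ) = true ∧
      ∀ φ ∈ I l, ∃ l' ∈ φ, S1 l' (((Pc a k + j : ℕ) : ℤ) + D l l') = false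
  · have hgoal : ind I D (mix W a S1 S2) l ((Bst W k + (W + j) : ℕ) : ℤ) = 1 := by
      unfold ind
      rw [if_pos]
      constructor
      · rw [mix_mid1 W a S1 S2 ha1 hj l]; exact hc.1
      · intro φ hφ
        obtain ⟨l', hl', hf⟩ := hc.2 φ hφ
        refine ⟨l', hl', ?_⟩
        rw [mix_lookup1 W a S1 S2 ha1 hj (D l l') (hW l l') l']
        split_ifs with h
        · rw [show (Pc a k : ℤ) + ((j : ℤ) + D l l') = ((Pc a k + j : ℕ) : ℤ) + D l l' by
            push_cast; ring]
          exact hf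
        · rfl
    rw [hgoal]
    exact ind_le_one I D S1 l _
  · unfold ind
    rw [if_neg hc]
    exact ind_nonneg I D _ l _

lemma ind_le1 (hW : ∀ l l', (D l l').natAbs ≤ W) (ha1 : a ≤ 1)
    {k j : ℕ} (hj : j < pblk a k) (hd1 : W ≤ j) (hd2 : j + W < pblk a k) (l : L) :
    ind I D (mix W a S1 S2) l ((Bst W k + (W + j) : ℕ) : ℤ) ≤
      ind I D S1 l ((Pc a k + j : ℕ) : ℤ) := by
  by_cases hc : mix W a S1 S2 l ((Bst W k + (W + j) : ℕ) : ℤ) = true ∧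
      ∀ φ ∈ I l, ∃ l' ∈ φ, mix W a S1 S2 l' (((Bst W k + (W + j) : ℕ) : ℤ) + D l l') = false
  · have hgoal : ind I D S1 l ((Pc a k + j : ℕ) : ℤ) = 1 := by
      unfold ind
      rw [if_pos]
      constructor
      · rw [← mix_mid1 W a S1 S2 ha1 hj l]; exact hc.1
      · intro φ hφ
        obtain ⟨l', hl', hf⟩ := hc.2 φ hφ
        refine ⟨l', hl', ?_⟩
        rw [mix_lookup1 W a S1 S2 ha1 hj (D l l') (hW l l') l'] at hf
        have hDW := hW l l'
        rw [if_pos ⟨by omega, by omega⟩] at hf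
        rw [show ((Pc a k + j : ℕ) : ℤ) + D l l' = (Pc a k : ℤ) + ((j : ℤ) + D l l') by
          push_cast; ring]
        exact hf
    rw [hgoal]
    exact ind_le_one I D _ l _
  · unfold ind
    rw [if_neg hc]
    exact ind_nonneg I D _ l _

lemma ind_ge2 (hW : ∀ l l', (D l l').natAbs ≤ W) (ha1 : a ≤ 1)
    {k j : ℕ} (hj : j < qblk a k) (l : L) :
    ind I D S2 l ((Qc a k + j : ℕ) : ℤ) ≤
      ind I D (mix W a S1 S2) l ((Bst W k + (2 * W + pblk a k + j) : ℕ) : ℤ) := by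
  by_cases hc : S2 l ((Qc a k + j : ℕ) : ℤ) = true ∧
      ∀ φ ∈ I l, ∃ l' ∈ φ, S2 l' (((Qc a k + j : ℕ) : ℤ) + D l l') = false
  · have hgoal : ind I D (mix W a S1 S2) l ((Bst W k + (2 * W + pblk a k + j) : ℕ) : ℤ) = 1 := by
      unfold ind
      rw [if_pos]
      constructor
      · rw [mix_mid2 W a S1 S2 ha1 hj l]; exact hc.1
      · intro φ hφ
        obtain ⟨l', hl', hf⟩ := hc.2 φ hφ
        refine ⟨l', hl', ?_⟩
        rw [mix_lookup2 W a S1 S2 ha1 hj (D l l') (hW l l') l']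
        split_ifs with h
        · rw [show (Qc a k : ℤ) + ((j : ℤ) + D l l') = ((Qc a k + j : ℕ) : ℤ) + D l l' by
            push_cast; ring]
          exact hf
        · rfl
    rw [hgoal]
    exact ind_le_one I D S2 l _
  · unfold ind
    rw [if_neg hc]
    exact ind_nonneg I D _ l _

lemma ind_le2 (hW : ∀ l l', (D l l').natAbs ≤ W) (ha1 : a ≤ 1)
    {k j : ℕ} (hj : j < qblk a k) (hd1 : W ≤ j) (hd2 : j + W < qblk a k) (l : L) :
    ind I D (mix W a S1 S2) l ((Bst W k + (2 * W + pblk a k + j) : ℕ) : ℤ) ≤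
      ind I D S2 l ((Qc a k + j : ℕ) : ℤ) := by
  by_cases hc : mix W a S1 S2 l ((Bst W k + (2 * W + pblk a k + j) : ℕ) : ℤ) = true ∧
      ∀ φ ∈ I l, ∃ l' ∈ φ,
        mix W a S1 S2 l' (((Bst W k + (2 * W + pblk a k + j) : ℕ) : ℤ) + D l l') = false
  · have hgoal : ind I D S2 l ((Qc a k + j : ℕ) : ℤ) = 1 := by
      unfold ind
      rw [if_pos]
      constructor
      · rw [← mix_mid2 W a S1 S2 ha1 hj l]; exact hc.1
      · intro φ hφ
        obtain ⟨l', hl', hf⟩ := hc.2 φ hφ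
        refine ⟨l', hl', ?_⟩
        rw [mix_lookup2 W a S1 S2 ha1 hj (D l l') (hW l l') l'] at hf
        have hDW := hW l l'
        rw [if_pos ⟨by omega, by omega⟩] at hf
        rw [show ((Qc a k + j : ℕ) : ℤ) + D l l' = (Qc a k : ℤ) + ((j : ℤ) + D l l') by
          push_cast; ring]
        exact hf
    rw [hgoal]
    exact ind_le_one I D _ l _
  · unfold ind
    rw [if_neg hc]
    exact ind_nonneg I D _ l _

end IndComp

section Sums

variable (I : L → Set (Set L)) (D : L → L → ℤ) (W : ℕ) (a : ℝ) (S1 S2 : L → ℤ → Bool)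

lemma sum_range_add' (f : ℕ → ℝ) (m c : ℕ) :
    ∑ o ∈ Finset.range (m + c), f o
      = ∑ o ∈ Finset.range m, f o + ∑ j ∈ Finset.range c, f (m + j) := by
  induction c with
  | zero => simp
  | succ c ih =>
    rw [show m + (c+1) = (m + c) + 1 by ring, Finset.sum_range_succ, ih,
      Finset.sum_range_succ]
    ring

/-- Prefix sums of the indicator sequence. -/
noncomputable def Ftot (S : L → ℤ → Bool) (l : L) (n : ℕ) : ℝ :=
  ∑ s ∈ Finset.range n, ind I D S l (s : ℤ)

lemma Ftot_nonneg (S : L → ℤ → Bool) (l : L) (n : ℕ) : 0 ≤ Ftot I D S l n :=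
  Finset.sum_nonneg fun s _ => ind_nonneg I D S l _

lemma Ftot_le (S : L → ℤ → Bool) (l : L) (n : ℕ) : Ftot I D S l n ≤ n := by
  calc Ftot I D S l n ≤ ∑ _s ∈ Finset.range n, (1:ℝ) :=
        Finset.sum_le_sum fun s _ => ind_le_one I D S l _
    _ = n := by simp

lemma Ftot_mono (S : L → ℤ → Bool) (l : L) : Monotone (Ftot I D S l) := by
  intro m n h
  exact Finset.sum_le_sum_of_subset_of_nonneg (Finset.range_subset_range.mpr h)
    (fun s _ _ => ind_nonneg I D S l _)

lemma Ftot_add_le (S : L → ℤ → Bool) (l : L) (n m : ℕ) :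
    Ftot I D S l (n + m) ≤ Ftot I D S l n + m := by
  unfold Ftot
  rw [sum_range_add']
  have : ∑ j ∈ Finset.range m, ind I D S l ((n + j : ℕ) : ℤ) ≤ ∑ _j ∈ Finset.range m, (1:ℝ) :=
    Finset.sum_le_sum fun s _ => ind_le_one I D S l _
  simp only [Finset.sum_const, Finset.card_range, nsmul_eq_mul, mul_one] at this
  linarith

lemma err_sum (p : ℕ) :
    (∑ j ∈ Finset.range p, if W ≤ j ∧ j + W < p then (0:ℝ) else 1) ≤ 2 * W := by
  have hle : ∀ j ∈ Finset.range p,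
      (if W ≤ j ∧ j + W < p then (0:ℝ) else 1)
        ≤ (if j < W then (1:ℝ) else 0) + (if p ≤ j + W then (1:ℝ) else 0) := by
    intro j hj
    split_ifs <;> norm_num <;> omega
  have hA : (∑ j ∈ Finset.range p, if j < W then (1:ℝ) else 0) ≤ W := by
    rw [Finset.sum_boole]
    have hsub : (Finset.range p).filter (fun j => j < W) ⊆ Finset.range W := by
      intro x hx
      simp only [Finset.mem_filter, Finset.mem_range] at hx ⊢
      exact hx.2
    have := Finset.card_le_card hsub
    rw [Finset.card_range] at this
    exact_mod_cast this
  have hB : (∑ j ∈ Finset.range p, if p ≤ j + W then (1:ℝ) else 0) ≤ W := by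
    rw [Finset.sum_boole]
    have hsub : (Finset.range p).filter (fun j => p ≤ j + W) ⊆ Finset.Ico (p - W) p := by
      intro x hx
      simp only [Finset.mem_filter, Finset.mem_range, Finset.mem_Ico] at hx ⊢
      omega
    have := Finset.card_le_card hsub
    rw [Nat.card_Ico] at this
    have h2 : p - (p - W) ≤ W := by omega
    have h3 : ((Finset.range p).filter (fun j => p ≤ j + W)).card ≤ W := le_trans this h2
    exact_mod_cast h3
  calc (∑ j ∈ Finset.range p, if W ≤ j ∧ j + W < p then (0:ℝ) else 1)
      ≤ ∑ j ∈ Finset.range p,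
          ((if j < W then (1:ℝ) else 0) + (if p ≤ j + W then (1:ℝ) else 0)) :=
        Finset.sum_le_sum hle
    _ = (∑ j ∈ Finset.range p, if j < W then (1:ℝ) else 0)
        + (∑ j ∈ Finset.range p, if p ≤ j + W then (1:ℝ) else 0) := Finset.sum_add_distrib
    _ ≤ 2 * W := by linarith

/-- Sum of the mix indicator over block `k`. -/
noncomputable def BS (l : L) (k : ℕ) : ℝ :=
  ∑ o ∈ Finset.range (3 * W + (k + 1)),
    ind I D (mix W a S1 S2) l ((Bst W k + o : ℕ) : ℤ)

lemma BS_decomp (ha1 : a ≤ 1) (l : L) (k : ℕ) :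
    BS I D W a S1 S2 l k
      = (∑ j ∈ Finset.range (pblk a k),
          ind I D (mix W a S1 S2) l ((Bst W k + (W + j) : ℕ) : ℤ))
        + ∑ j ∈ Finset.range (qblk a k),
          ind I D (mix W a S1 S2) l ((Bst W k + (2 * W + pblk a k + j) : ℕ) : ℤ) := by
  set p := pblk a k
  set q := qblk a k
  have hpq : p + q = k + 1 := pq ha1 k
  set f : ℕ → ℝ := fun o => ind I D (mix W a S1 S2) l ((Bst W k + o : ℕ) : ℤ) with hf
  have h1 : 3 * W + (k + 1) = (((W + p) + W) + q) + W := by omega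
  have hd1 : ∑ o ∈ Finset.range W, f o = 0 := by
    apply Finset.sum_eq_zero
    intro o ho
    simp only [Finset.mem_range] at ho
    exact ind_mix_dead I D W a S1 S2 ha1 (by omega) (by omega) l
  have hd2 : ∑ j ∈ Finset.range W, f ((W + p) + j) = 0 := by
    apply Finset.sum_eq_zero
    intro o ho
    simp only [Finset.mem_range] at ho
    exact ind_mix_dead I D W a S1 S2 ha1 (by omega) (by omega) l
  have hd3 : ∑ j ∈ Finset.range W, f ((((W + p) + W) + q) + j) = 0 := by
    apply Finset.sum_eq_zero
    intro o ho
    simp only [Finset.mem_range] at ho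
    exact ind_mix_dead I D W a S1 S2 ha1 (by omega) (by omega) l
  have hmid1 : ∑ j ∈ Finset.range p, f (W + j)
      = ∑ j ∈ Finset.range p,
          ind I D (mix W a S1 S2) l ((Bst W k + (W + j) : ℕ) : ℤ) := rfl
  have hmid2 : ∑ j ∈ Finset.range q, f (((W + p) + W) + j)
      = ∑ j ∈ Finset.range q,
          ind I D (mix W a S1 S2) l ((Bst W k + (2 * W + p + j) : ℕ) : ℤ) := by
    apply Finset.sum_congr rfl
    intro j hj
    have : ((W + p) + W) + j = 2 * W + p + j := by ring
    rw [this]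
  calc BS I D W a S1 S2 l k = ∑ o ∈ Finset.range ((((W + p) + W) + q) + W), f o := by
        rw [← h1]; rfl
    _ = _ := by
        rw [sum_range_add' f (((W + p) + W) + q) W,
          sum_range_add' f ((W + p) + W) q,
          sum_range_add' f (W + p) W,
          sum_range_add' f W p,
          hd1, hd2, hd3, hmid1, hmid2]
        ring

lemma BS_lower (hW : ∀ l l', (D l l').natAbs ≤ W) (ha1 : a ≤ 1) (l : L) (k : ℕ) :
    (∑ j ∈ Finset.range (pblk a k), ind I D S1 l ((Pc a k + j : ℕ) : ℤ))
      + (∑ j ∈ Finset.range (qblk a k), ind I D S2 l ((Qc a k + j : ℕ) : ℤ))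
      ≤ BS I D W a S1 S2 l k := by
  rw [BS_decomp I D W a S1 S2 ha1 l k]
  gcongr with j hj j hj
  · exact ind_ge1 I D W a S1 S2 hW ha1 (Finset.mem_range.mp hj) l
  · exact ind_ge2 I D W a S1 S2 hW ha1 (Finset.mem_range.mp hj) l

lemma BS_upper (hW : ∀ l l', (D l l').natAbs ≤ W) (ha1 : a ≤ 1) (l : L) (k : ℕ) :
    BS I D W a S1 S2 l k
      ≤ (∑ j ∈ Finset.range (pblk a k), ind I D S1 l ((Pc a k + j : ℕ) : ℤ))
        + (∑ j ∈ Finset.range (qblk a k), ind I D S2 l ((Qc a k + j : ℕ) : ℤ))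
        + 4 * W := by
  rw [BS_decomp I D W a S1 S2 ha1 l k]
  have h1 : ∑ j ∈ Finset.range (pblk a k),
      ind I D (mix W a S1 S2) l ((Bst W k + (W + j) : ℕ) : ℤ)
      ≤ (∑ j ∈ Finset.range (pblk a k), ind I D S1 l ((Pc a k + j : ℕ) : ℤ)) + 2 * W := by
    have hptwise : ∀ j ∈ Finset.range (pblk a k),
        ind I D (mix W a S1 S2) l ((Bst W k + (W + j) : ℕ) : ℤ)
          ≤ ind I D S1 l ((Pc a k + j : ℕ) : ℤ)
            + (if W ≤ j ∧ j + W < pblk a k then (0:ℝ) else 1) := by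
      intro j hj
      simp only [Finset.mem_range] at hj
      split_ifs with h
      · rw [add_zero]
        exact ind_le1 I D W a S1 S2 hW ha1 hj h.1 h.2 l
      · have := ind_le_one I D (mix W a S1 S2) l ((Bst W k + (W + j) : ℕ) : ℤ)
        have := ind_nonneg I D S1 l ((Pc a k + j : ℕ) : ℤ)
        linarith
    calc ∑ j ∈ Finset.range (pblk a k),
        ind I D (mix W a S1 S2) l ((Bst W k + (W + j) : ℕ) : ℤ)
        ≤ ∑ j ∈ Finset.range (pblk a k),
            (ind I D S1 l ((Pc a k + j : ℕ) : ℤ)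
              + (if W ≤ j ∧ j + W < pblk a k then (0:ℝ) else 1)) :=
          Finset.sum_le_sum hptwise
      _ = (∑ j ∈ Finset.range (pblk a k), ind I D S1 l ((Pc a k + j : ℕ) : ℤ))
            + ∑ j ∈ Finset.range (pblk a k),
                (if W ≤ j ∧ j + W < pblk a k then (0:ℝ) else 1) := Finset.sum_add_distrib
      _ ≤ _ := by have := err_sum W (pblk a k); linarith
  have h2 : ∑ j ∈ Finset.range (qblk a k),
      ind I D (mix W a S1 S2) l ((Bst W k + (2 * W + pblk a k + j) : ℕ) : ℤ)
      ≤ (∑ j ∈ Finset.range (qblk a k), ind I D S2 l ((Qc a k + j : ℕ) : ℤ)) + 2 * W := by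
    have hptwise : ∀ j ∈ Finset.range (qblk a k),
        ind I D (mix W a S1 S2) l ((Bst W k + (2 * W + pblk a k + j) : ℕ) : ℤ)
          ≤ ind I D S2 l ((Qc a k + j : ℕ) : ℤ)
            + (if W ≤ j ∧ j + W < qblk a k then (0:ℝ) else 1) := by
      intro j hj
      simp only [Finset.mem_range] at hj
      split_ifs with h
      · rw [add_zero]
        exact ind_le2 I D W a S1 S2 hW ha1 hj h.1 h.2 l
      · have := ind_le_one I D (mix W a S1 S2) l ((Bst W k + (2 * W + pblk a k + j) : ℕ) : ℤ)
        have := ind_nonneg I D S2 l ((Qc a k + j : ℕ) : ℤ)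
        linarith
    calc ∑ j ∈ Finset.range (qblk a k),
        ind I D (mix W a S1 S2) l ((Bst W k + (2 * W + pblk a k + j) : ℕ) : ℤ)
        ≤ ∑ j ∈ Finset.range (qblk a k),
            (ind I D S2 l ((Qc a k + j : ℕ) : ℤ)
              + (if W ≤ j ∧ j + W < qblk a k then (0:ℝ) else 1)) :=
          Finset.sum_le_sum hptwise
      _ = (∑ j ∈ Finset.range (qblk a k), ind I D S2 l ((Qc a k + j : ℕ) : ℤ))
            + ∑ j ∈ Finset.range (qblk a k),
                (if W ≤ j ∧ j + W < qblk a k then (0:ℝ) else 1) := Finset.sum_add_distrib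
      _ ≤ _ := by have := err_sum W (qblk a k); linarith
  linarith

lemma telescope (hW : ∀ l l', (D l l').natAbs ≤ W) (ha1 : a ≤ 1) (l : L) (K : ℕ) :
    Ftot I D S1 l (Pc a K) + Ftot I D S2 l (Qc a K)
        ≤ Ftot I D (mix W a S1 S2) l (Bst W K)
      ∧ Ftot I D (mix W a S1 S2) l (Bst W K)
        ≤ Ftot I D S1 l (Pc a K) + Ftot I D S2 l (Qc a K) + 4 * W * K := by
  induction K with
  | zero => simp [Ftot, Pc, Qc, Bst]
  | succ K ih =>
    have hB : Bst W (K + 1) = Bst W K + (3 * W + (K + 1)) := rfl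
    have hsplit : Ftot I D (mix W a S1 S2) l (Bst W (K + 1))
        = Ftot I D (mix W a S1 S2) l (Bst W K) + BS I D W a S1 S2 l K := by
      unfold Ftot BS
      rw [hB, sum_range_add']
    have hstep1 : Ftot I D S1 l (Pc a (K + 1))
        = Ftot I D S1 l (Pc a K)
          + ∑ j ∈ Finset.range (pblk a K), ind I D S1 l ((Pc a K + j : ℕ) : ℤ) := by
      unfold Ftot
      rw [show Pc a (K+1) = Pc a K + pblk a K from rfl, sum_range_add']
    have hstep2 : Ftot I D S2 l (Qc a (K + 1))
        = Ftot I D S2 l (Qc a K)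
          + ∑ j ∈ Finset.range (qblk a K), ind I D S2 l ((Qc a K + j : ℕ) : ℤ) := by
      unfold Ftot
      rw [show Qc a (K+1) = Qc a K + qblk a K from rfl, sum_range_add']
    have hlo := BS_lower I D W a S1 S2 hW ha1 l K
    have hhi := BS_upper I D W a S1 S2 hW ha1 l K
    constructor
    · rw [hsplit, hstep1, hstep2]; linarith [ih.1]
    · rw [hsplit, hstep1, hstep2]
      have hc : ((K + 1 : ℕ) : ℝ) = (K : ℝ) + 1 := by push_cast; ring
      rw [hc]
      nlinarith [ih.2]

lemma sandwich (hW : ∀ l l', (D l l').natAbs ≤ W) (ha1 : a ≤ 1) (l : L) (T : ℕ) :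
    Ftot I D S1 l (Pc a (blk W T)) + Ftot I D S2 l (Qc a (blk W T))
        ≤ Ftot I D (mix W a S1 S2) l T
      ∧ Ftot I D (mix W a S1 S2) l T
        ≤ Ftot I D S1 l (Pc a (blk W T)) + Ftot I D S2 l (Qc a (blk W T))
          + (4 * W + 2) * (blk W T + 1) := by
  set K := blk W T with hK
  have h1 : Bst W K ≤ T := blk_le W T
  have h2 : T < Bst W (K + 1) := blk_lt W T
  have hmono := Ftot_mono I D (mix W a S1 S2) l
  have tel1 := telescope I D W a S1 S2 hW ha1 l K
  have tel2 := telescope I D W a S1 S2 hW ha1 l (K + 1)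
  constructor
  · exact le_trans tel1.1 (hmono h1)
  · have hstep : Ftot I D S1 l (Pc a (K + 1)) ≤ Ftot I D S1 l (Pc a K) + (K + 1) := by
      have := Ftot_add_le I D S1 l (Pc a K) (pblk a K)
      have hp : (pblk a K : ℝ) ≤ (K + 1 : ℕ) := by exact_mod_cast pblk_le ha1 K
      rw [show Pc a (K+1) = Pc a K + pblk a K from rfl]
      push_cast at hp ⊢
      linarith
    have hstep2 : Ftot I D S2 l (Qc a (K + 1)) ≤ Ftot I D S2 l (Qc a K) + (K + 1) := by
      have := Ftot_add_le I D S2 l (Qc a K) (qblk a K)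
      have hq : (qblk a K : ℝ) ≤ (K + 1 : ℕ) := by
        have := pq ha1 K
        exact_mod_cast (by omega : qblk a K ≤ K + 1)
      push_cast at hq ⊢
      rw [show Qc a (K+1) = Qc a K + qblk a K from rfl]
      linarith
    have := hmono (le_of_lt h2)
    have h4 := tel2.2
    push_cast at h4 ⊢
    nlinarith

end Sums

section Analysis

set_option maxHeartbeats 1000000 in
/-- The key ratio limit: if `c·sfun K − K ≤ G K ≤ c·sfun K + (K+1)` then
`G (blk W T) / T → c`. -/
lemma ratio_limit (W : ℕ) (c : ℝ) (hc0 : 0 ≤ c) (hc1 : c ≤ 1) (G : ℕ → ℕ)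
    (hlo : ∀ K, c * sfun K - K ≤ (G K : ℝ))
    (hhi : ∀ K, (G K : ℝ) ≤ c * sfun K + (K + 1)) :
    Tendsto (fun T : ℕ => (G (blk W T) : ℝ) / T) atTop (nhds c) := by
  have hbound : ∀ T : ℕ, 1 ≤ blk W T →
      |(G (blk W T) : ℝ) / T - c| ≤ (6 * W + 4) / (blk W T) := by
    intro T hK1
    set K := blk W T with hK
    have hBleT : Bst W K ≤ T := blk_le W T
    have hTltB : T < Bst W (K + 1) := blk_lt W T
    have hsK : (sfun K : ℝ) = K * (K + 1) / 2 := sfun_cast K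
    have hKpos : (1:ℝ) ≤ K := by exact_mod_cast hK1
    have hW0 : (0:ℝ) ≤ W := Nat.cast_nonneg W
    have hsfun_le_T : (sfun K : ℝ) ≤ T := by
      have h1 : sfun K ≤ Bst W K := by rw [Bst_eq]; omega
      exact_mod_cast le_trans h1 hBleT
    have hTge : (K:ℝ) * (K + 1) / 2 ≤ T := by rw [← hsK]; exact hsfun_le_T
    have hTpos : (0:ℝ) < T := by nlinarith
    -- upper bound
    have hup : (G K : ℝ) / T - c ≤ (6 * W + 4) / K := by
      have h1 : (G K : ℝ) ≤ c * T + (K + 1) := by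
        have h0 := hhi K
        have h2 : c * sfun K ≤ c * T := by nlinarith
        linarith
      have h2 : (G K : ℝ) / T ≤ c + (K + 1) / T := by
        rw [div_le_iff₀ hTpos]
        have he : (c + (K + 1) / T) * T = c * T + (K + 1) := by field_simp
        rw [he]; exact h1
      have h3 : ((K:ℝ) + 1) / T ≤ 2 / K := by
        rw [div_le_div_iff₀ hTpos (by linarith)]
        nlinarith
      have h4 : (2:ℝ) / K ≤ (6 * W + 4) / K := by
        apply (div_le_div_iff_of_pos_right (by linarith)).mpr
        linarith
      linarith
    -- lower bound
    have hdown : c - (G K : ℝ) / T ≤ (6 * W + 4) / K := by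
      have hTle : (T:ℝ) ≤ Bst W (K + 1) := by exact_mod_cast le_of_lt hTltB
      have hB3 : (Bst W (K + 1) : ℝ) = 3 * W * (K + 1) + sfun K + (K + 1) := by
        rw [Bst_eq]
        have : (sfun (K+1) : ℝ) = sfun K + (K + 1) := by
          rw [show sfun (K+1) = sfun K + (K+1) from rfl]; push_cast; ring
        push_cast [this]
        push_cast
        ring
      have h1 : c * T ≤ c * sfun K + (3 * W + 1) * (K + 1) := by
        have h2 : c * T ≤ c * Bst W (K + 1) := by nlinarith
        nlinarith [h2, hB3]
      have h5 : c * T - (3 * W + 2) * (K + 1) ≤ G K := by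
        have h0 := hlo K
        nlinarith
      have h6 : c - (3 * W + 2) * (K + 1) / T ≤ (G K : ℝ) / T := by
        rw [le_div_iff₀ hTpos]
        have he : (c - (3 * W + 2) * (K + 1) / T) * T = c * T - (3 * W + 2) * (K + 1) := by
          field_simp
        rw [he]; exact h5
      have h7 : (3 * (W:ℝ) + 2) * (K + 1) / T ≤ (6 * W + 4) / K := by
        rw [div_le_div_iff₀ hTpos (by linarith)]
        nlinarith [mul_le_mul_of_nonneg_left hTge (show (0:ℝ) ≤ 6 * W + 4 by linarith)]
      linarith
    rw [abs_le]
    constructor <;> linarith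
  have h0 : Tendsto (fun T : ℕ => (6 * (W:ℝ) + 4) / (blk W T)) atTop (nhds 0) :=
    (tendsto_const_div_atTop_nhds_zero_nat (6 * (W:ℝ) + 4)).comp (blk_tendsto W)
  have hsub : Tendsto (fun T : ℕ => (G (blk W T) : ℝ) / T - c) atTop (nhds 0) := by
    apply squeeze_zero_norm' ?_ h0
    filter_upwards [(blk_tendsto W).eventually_ge_atTop 1] with T hT
    simpa [Real.norm_eq_abs] using hbound T hT
  have := hsub.add (tendsto_const_nhds (x := c))
  simpa using this

lemma G_comp_tendsto (W : ℕ) (c : ℝ) (hc : 0 < c) (G : ℕ → ℕ)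
    (hlo : ∀ K, c * sfun K - K ≤ (G K : ℝ)) :
    Tendsto (fun T : ℕ => G (blk W T)) atTop atTop := by
  have hG : Tendsto G atTop atTop := by
    apply tendsto_atTop_atTop.mpr
    intro C
    obtain ⟨K0, hK0⟩ : ∃ K0 : ℕ, (2 * ((C:ℝ) + 1)) / c ≤ K0 ∧ 1 ≤ K0 := by
      obtain ⟨K0, hK0⟩ := exists_nat_ge ((2 * ((C:ℝ) + 1)) / c)
      exact ⟨max K0 1, le_trans hK0 (by exact_mod_cast le_max_left K0 1), le_max_right K0 1⟩
    refine ⟨K0, fun K hK => ?_⟩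
    have hKr : (2 * ((C:ℝ) + 1)) / c ≤ K := le_trans hK0.1 (by exact_mod_cast hK)
    have hK1 : (1:ℝ) ≤ K := by exact_mod_cast le_trans hK0.2 hK
    have hcK : 2 * ((C:ℝ) + 1) ≤ c * K := by
      rw [div_le_iff₀ hc] at hKr
      linarith
    have hs : (sfun K : ℝ) = K * (K + 1) / 2 := sfun_cast K
    have h1 : (C:ℝ) ≤ c * sfun K - K := by rw [hs]; nlinarith
    have := le_trans h1 (hlo K)
    exact_mod_cast this
  exact hG.comp (blk_tendsto W)

lemma main_limit (W : ℕ) (c r : ℝ) (hc0 : 0 ≤ c) (hc1 : c ≤ 1) (G : ℕ → ℕ)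
    (hlo : ∀ K, c * sfun K - K ≤ (G K : ℝ))
    (hhi : ∀ K, (G K : ℝ) ≤ c * sfun K + (K + 1))
    (F : ℕ → ℝ) (hF0 : ∀ n, 0 ≤ F n) (hFle : ∀ n, F n ≤ n)
    (hF : Tendsto (fun n : ℕ => F n / n) atTop (nhds r)) :
    Tendsto (fun T : ℕ => F (G (blk W T)) / T) atTop (nhds (c * r)) := by
  rcases eq_or_lt_of_le hc0 with hc | hc
  · -- c = 0
    rw [← hc, zero_mul]
    have hup := ratio_limit W c hc0 hc1 G hlo hhi
    rw [← hc] at hup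
    apply tendsto_of_tendsto_of_tendsto_of_le_of_le' tendsto_const_nhds hup
    · filter_upwards [eventually_ge_atTop 1] with T hT
      have hTpos : (0:ℝ) < T := by exact_mod_cast hT
      exact div_nonneg (hF0 _) (le_of_lt hTpos)
    · filter_upwards [eventually_ge_atTop 1] with T hT
      have hTpos : (0:ℝ) < T := by exact_mod_cast hT
      have := hFle (G (blk W T))
      gcongr
  · -- c > 0
    have hGtop := G_comp_tendsto W c hc G hlo
    have hfac1 : Tendsto (fun T : ℕ => F (G (blk W T)) / (G (blk W T) : ℝ)) atTop (nhds r) :=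
      hF.comp hGtop
    have hfac2 := ratio_limit W c hc0 hc1 G hlo hhi
    have hprod := hfac1.mul hfac2
    rw [mul_comm r c] at hprod
    rw [mul_comm c r]
    rw [mul_comm r c]
    apply hprod.congr'
    filter_upwards [hGtop.eventually_ge_atTop 1] with T hT
    have hg : ((G (blk W T) : ℝ)) ≠ 0 := by
      have h1 : (1:ℝ) ≤ G (blk W T) := by exact_mod_cast hT
      linarith
    field_simp

end Analysis

section Key

lemma key {L : Type*} [Fintype L] (I : L → Set (Set L)) (D : L → L → ℤ)
    (S1 S2 : L → ℤ → Bool) (r1 r2 : L → ℝ)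
    (h1 : ∀ l, Tendsto (rateAvg I D S1 l) atTop (nhds (r1 l)))
    (h2 : ∀ l, Tendsto (rateAvg I D S2 l) atTop (nhds (r2 l)))
    (a b : ℝ) (ha : 0 ≤ a) (hb : 0 ≤ b) (hab : a + b = 1) :
    ∃ S : L → ℤ → Bool,
      ∀ l, Tendsto (rateAvg I D S l) atTop (nhds (a * r1 l + b * r2 l)) := by
  classical
  set W : ℕ := Finset.univ.sup (fun p : L × L => (D p.1 p.2).natAbs) with hWdef
  have hW : ∀ l l', (D l l').natAbs ≤ W := fun l l' =>
    Finset.le_sup (f := fun p : L × L => (D p.1 p.2).natAbs) (Finset.mem_univ (l, l'))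
  have ha1 : a ≤ 1 := by linarith
  have hb1 : b ≤ 1 := by linarith
  refine ⟨mix W a S1 S2, fun l => ?_⟩
  have hPlo : ∀ K, a * sfun K - K ≤ (Pc a K : ℝ) := by
    intro K
    have h := (Pc_bounds ha K).1
    have : (0:ℝ) ≤ K := Nat.cast_nonneg K
    linarith
  have hPhi : ∀ K, (Pc a K : ℝ) ≤ a * sfun K + (K + 1) := by
    intro K
    have h := (Pc_bounds ha K).2
    linarith
  have hPQcast : ∀ K, (Pc a K : ℝ) + (Qc a K : ℝ) = (sfun K : ℝ) := by
    intro K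
    exact_mod_cast congrArg (fun n : ℕ => (n : ℝ)) (PQ ha1 K)
  have hQlo : ∀ K, b * sfun K - K ≤ (Qc a K : ℝ) := by
    intro K
    have hpc := (Pc_bounds ha K).2
    have hq := hPQcast K
    have hbeq : b = 1 - a := by linarith
    rw [hbeq]
    nlinarith
  have hQhi : ∀ K, (Qc a K : ℝ) ≤ b * sfun K + (K + 1) := by
    intro K
    have hpc := (Pc_bounds ha K).1
    have hq := hPQcast K
    have hbeq : b = 1 - a := by linarith
    have : (0:ℝ) ≤ K := Nat.cast_nonneg K
    rw [hbeq]
    nlinarith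
  have hF1 : Tendsto (fun n : ℕ => Ftot I D S1 l n / n) atTop (nhds (r1 l)) :=
    (h1 l).congr (fun n => by rw [rateAvg_eq]; rfl)
  have hF2 : Tendsto (fun n : ℕ => Ftot I D S2 l n / n) atTop (nhds (r2 l)) :=
    (h2 l).congr (fun n => by rw [rateAvg_eq]; rfl)
  have main1 := main_limit W a (r1 l) ha ha1 (Pc a) hPlo hPhi (Ftot I D S1 l)
    (Ftot_nonneg I D S1 l) (Ftot_le I D S1 l) hF1
  have main2 := main_limit W b (r2 l) hb hb1 (Qc a) hQlo hQhi (Ftot I D S2 l)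
    (Ftot_nonneg I D S2 l) (Ftot_le I D S2 l) hF2
  have herr0 : Tendsto (fun T : ℕ => ((blk W T + 1 : ℕ) : ℝ) / T) atTop (nhds 0) := by
    have := ratio_limit W 0 le_rfl zero_le_one (fun K => K + 1)
      (fun K => by push_cast; nlinarith [Nat.cast_nonneg (α := ℝ) K])
      (fun K => by push_cast; nlinarith [Nat.cast_nonneg (α := ℝ) (sfun K)])
    simpa using this
  have herr : Tendsto (fun T : ℕ => (4 * (W:ℝ) + 2) * (((blk W T + 1 : ℕ) : ℝ) / T))
      atTop (nhds 0) := by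
    have := herr0.const_mul (4 * (W:ℝ) + 2)
    simpa using this
  have hlo_lim : Tendsto (fun T : ℕ =>
      Ftot I D S1 l (Pc a (blk W T)) / T + Ftot I D S2 l (Qc a (blk W T)) / T)
      atTop (nhds (a * r1 l + b * r2 l)) := main1.add main2
  have hup_lim : Tendsto (fun T : ℕ =>
      (Ftot I D S1 l (Pc a (blk W T)) / T + Ftot I D S2 l (Qc a (blk W T)) / T)
        + (4 * (W:ℝ) + 2) * (((blk W T + 1 : ℕ) : ℝ) / T))
      atTop (nhds (a * r1 l + b * r2 l)) := by
    have := hlo_lim.add herr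
    simpa using this
  apply tendsto_of_tendsto_of_tendsto_of_le_of_le' hlo_lim hup_lim
  · filter_upwards [eventually_ge_atTop 1] with T hT
    have hTpos : (0:ℝ) < T := by exact_mod_cast hT
    have hsand := (sandwich I D W a S1 S2 hW ha1 l T).1
    rw [rateAvg_eq]
    rw [← add_div]
    gcongr
    exact hsand
  · filter_upwards [eventually_ge_atTop 1] with T hT
    have hTpos : (0:ℝ) < T := by exact_mod_cast hT
    have hsand := (sandwich I D W a S1 S2 hW ha1 l T).2
    rw [rateAvg_eq]
    have he : Ftot I D S1 l (Pc a (blk W T)) / T + Ftot I D S2 l (Qc a (blk W T)) / T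
        + (4 * (W:ℝ) + 2) * (((blk W T + 1 : ℕ) : ℝ) / T)
        = (Ftot I D S1 l (Pc a (blk W T)) + Ftot I D S2 l (Qc a (blk W T))
            + (4 * (W:ℝ) + 2) * ((blk W T : ℝ) + 1)) / T := by
      push_cast
      field_simp
    rw [he]
    gcongr
    exact hsand

end Key

end StmtSix

/-- the rate region of a network is a convex subset of `ℝ^L`. -/
theorem stmt_6 {L : Type*} [Fintype L] (I : L → Set (Set L)) (D : L → L → ℤ) :
    Convex ℝ {R : L → ℝ | Achievable I D R} := by
  intro R1 hR1 R2 hR2 a b ha hb hab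
  intro ε hε
  obtain ⟨S1, r1, h1, hr1⟩ := hR1 ε hε
  obtain ⟨S2, r2, h2, hr2⟩ := hR2 ε hε
  obtain ⟨S, hS⟩ := StmtSix.key I D S1 S2 r1 r2 h1 h2 a b ha hb hab
  refine ⟨S, fun l => a * r1 l + b * r2 l, hS, fun l => ?_⟩
  have e1 := hr1 l
  have e2 := hr2 l
  simp only [Pi.add_apply, Pi.smul_apply, smul_eq_mul]
  nlinarith
end

section
/- Every rate vector in the rate region R^N of a network N can be achieved using only collision-free periodic schedules: for any achievable R and any ε > 0, there exists a collision-free schedule S with finite period T_p (i.e., S(l,t) = S(l, t+T_p) for all l, t) such that R_S(l) ≥ R(l) − ε for all l ∈ L. -/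
open scoped Classical
open Filter
set_option maxHeartbeats 1000000

def CollisionFree {L : Type*} (I : L → Set (Set L)) (D : L → L → ℤ)
    (S : L → ℤ → Bool) : Prop :=
  ∀ l t, S l t = true → ∀ φ ∈ I l, ∃ l' ∈ φ, S l' (t + D l l') = false

lemma ite_irrel {α : Sort*} (c : Prop) (h1 h2 : Decidable c) (x y : α) :
    @ite α c h1 x y = @ite α c h2 x y := by
  cases Subsingleton.elim h1 h2; rfl

lemma sum_periodic_block (g : ℕ → ℝ) (Tp : ℕ) (hper : ∀ t, g (t + Tp) = g t) :
    ∀ n, ∑ t ∈ Finset.range (n + Tp), g t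
      = (∑ t ∈ Finset.range n, g t) + ∑ t ∈ Finset.range Tp, g t := by
  intro n
  induction n with
  | zero => simp
  | succ n ih =>
      have h : n + 1 + Tp = (n + Tp) + 1 := by omega
      rw [h, Finset.sum_range_succ, ih, hper, Finset.sum_range_succ]
      ring

lemma sum_periodic_mul (g : ℕ → ℝ) (Tp : ℕ) (hper : ∀ t, g (t + Tp) = g t) :
    ∀ q s, ∑ t ∈ Finset.range (q * Tp + s), g t
      = q * (∑ t ∈ Finset.range Tp, g t) + ∑ t ∈ Finset.range s, g t := by
  intro q
  induction q with
  | zero => intro s; simp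
  | succ q ih =>
      intro s
      have h : (q + 1) * Tp + s = (q * Tp + s) + Tp := by ring
      rw [h, sum_periodic_block g Tp hper, ih s]
      push_cast
      ring

lemma cesaro_periodic (g : ℕ → ℝ) (Tp : ℕ) (hTp : 1 ≤ Tp)
    (h0 : ∀ t, 0 ≤ g t) (h1 : ∀ t, g t ≤ 1) (hper : ∀ t, g (t + Tp) = g t) :
    Tendsto (fun T => (∑ t ∈ Finset.range T, g t) / T) atTop
      (nhds ((∑ t ∈ Finset.range Tp, g t) / Tp)) := by
  set A := ∑ t ∈ Finset.range Tp, g t with hA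
  have hF0 : ∀ n, 0 ≤ ∑ t ∈ Finset.range n, g t := fun n => Finset.sum_nonneg fun i _ => h0 i
  have hF1 : ∀ n, (∑ t ∈ Finset.range n, g t) ≤ n := by
    intro n
    calc ∑ t ∈ Finset.range n, g t ≤ ∑ _t ∈ Finset.range n, (1:ℝ) :=
          Finset.sum_le_sum fun i _ => h1 i
      _ = n := by simp
  have hTpR : (0:ℝ) < Tp := by exact_mod_cast hTp
  have key : ∀ N : ℕ, 1 ≤ N →
      |(∑ t ∈ Finset.range N, g t) / N - A / Tp| ≤ (Tp : ℝ) / N := by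
    intro N hN1
    have hN : (0:ℝ) < N := by exact_mod_cast hN1
    set q := N / Tp with hq
    set s := N % Tp with hs
    have hNs : q * Tp + s = N := by
      rw [hq, hs, Nat.mul_comm]; exact Nat.div_add_mod N Tp
    have hsTp : s < Tp := Nat.mod_lt _ (by omega)
    have hFN : ∑ t ∈ Finset.range N, g t = q * A + ∑ t ∈ Finset.range s, g t := by
      rw [← hNs, sum_periodic_mul g Tp hper]
    have hNcast : (N:ℝ) = q * Tp + s := by exact_mod_cast hNs.symm
    have e1 : (∑ t ∈ Finset.range N, g t) / N - A / Tp
        = ((∑ t ∈ Finset.range s, g t) * Tp - A * s) / (N * Tp) := by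
      rw [div_sub_div _ _ (ne_of_gt hN) (ne_of_gt hTpR)]
      congr 1
      rw [hFN, hNcast]; ring
    rw [e1, abs_div, abs_of_pos (mul_pos hN hTpR), div_le_div_iff₀ (mul_pos hN hTpR) hN]
    have hsR : (s:ℝ) ≤ Tp := by exact_mod_cast hsTp.le
    have h2 : |(∑ t ∈ Finset.range s, g t) * Tp - A * s| ≤ (Tp:ℝ) * Tp := by
      rw [abs_le]
      constructor
      · nlinarith [hF0 s, hF1 s, hF0 Tp, hF1 Tp, hTpR.le]
      · nlinarith [hF0 s, hF1 s, hF0 Tp, hF1 Tp, hTpR.le]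
    nlinarith [mul_le_mul_of_nonneg_right h2 hN.le]
  have h0' : Tendsto (fun N : ℕ => (∑ t ∈ Finset.range N, g t) / N - A / Tp) atTop (nhds 0) := by
    refine squeeze_zero_norm' ?_ (tendsto_const_div_atTop_nhds_zero_nat (Tp:ℝ))
    filter_upwards [eventually_ge_atTop 1] with N hN
    simpa using key N hN
  have := h0'.add_const (A / Tp)
  simpa using this

/-- every achievable rate vector can be approached using only
collision-free periodic schedules. -/
theorem stmt_7 {L : Type*} [Fintype L] (I : L → Set (Set L)) (D : L → L → ℤ)
    (Dstar : ℕ) (hD : ∀ l, ∀ φ ∈ I l, ∀ l' ∈ φ, |D l l'| ≤ (Dstar : ℤ))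
    (R : L → ℝ) (hR : Achievable I D R) (ε : ℝ) (hε : 0 < ε) :
    ∃ (S : L → ℤ → Bool) (Tp : ℕ), 1 ≤ Tp ∧
      (∀ l t, S l (t + (Tp : ℤ)) = S l t) ∧
      CollisionFree I D S ∧
      ∃ r : L → ℝ, (∀ l, Tendsto (rateAvg I D S l) atTop (nhds (r l))) ∧
        ∀ l, R l - ε ≤ r l := by
  classical
  obtain ⟨S₀, r, hconv, hge⟩ := hR (ε/2) (by positivity)
  -- the limit rates are at most 1
  have hr1 : ∀ l, r l ≤ 1 := by
    intro l
    refine le_of_tendsto (hconv l) (Filter.Eventually.of_forall fun T => ?_)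
    unfold rateAvg
    refine div_le_one_of_le₀ ?_ (by positivity)
    refine le_trans (Finset.sum_le_sum (g := fun _ => (1:ℝ)) fun i _ => ?_) (by simp)
    split <;> norm_num
  -- choose a long window T
  have hev : ∀ᶠ T : ℕ in atTop,
      (∀ l, r l - ε/4 < rateAvg I D S₀ l T) ∧ max 1 ⌈8*(Dstar:ℝ)/ε⌉₊ ≤ T := by
    refine Filter.Eventually.and ?_ (Filter.eventually_ge_atTop _)
    rw [eventually_all]
    intro l
    exact (hconv l).eventually (eventually_gt_nhds (by linarith))
  obtain ⟨T, hT1, hTb⟩ := hev.exists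
  have hT0 : 1 ≤ T := le_trans (le_max_left _ _) hTb
  have hTR : (0:ℝ) < T := by exact_mod_cast hT0
  have hTε : 8 * (Dstar:ℝ) ≤ T * ε := by
    have h1 : (8*(Dstar:ℝ)/ε) ≤ T := Nat.ceil_le.1 (le_trans (le_max_right _ _) hTb)
    calc 8 * (Dstar:ℝ) = (8*(Dstar:ℝ)/ε) * ε := by field_simp
      _ ≤ T * ε := by exact mul_le_mul_of_nonneg_right h1 hε.le
  -- the periodized schedule
  set Tp : ℕ := T + Dstar with hTpdef
  have hTp1 : 1 ≤ Tp := by omega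
  have hTpZ : (0:ℤ) < (Tp:ℤ) := by exact_mod_cast hTp1
  set Ok : L → ℤ → Prop := fun l t => S₀ l t = true ∧
      ∀ φ ∈ I l, ∃ l' ∈ φ, S₀ l' (t + D l l') = false with hOkdef
  set S' : L → ℤ → Bool := fun l t =>
      decide ((Dstar:ℤ) ≤ t % (Tp:ℤ) ∧ t % (Tp:ℤ) < (T:ℤ) ∧ Ok l (t % (Tp:ℤ))) with hS'def
  have hmod_per : ∀ t : ℤ, (t + (Tp:ℤ)) % (Tp:ℤ) = t % (Tp:ℤ) := by
    intro t
    rw [show t + (Tp:ℤ) = t + (Tp:ℤ) * 1 by ring, Int.add_mul_emod_self_left]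
  have hper : ∀ l (t : ℤ), S' l (t + (Tp:ℤ)) = S' l t := by
    intro l t
    simp only [hS'def, hmod_per]
  -- collision freeness
  have hCF : CollisionFree I D S' := by
    intro l t hlt φ hφ
    simp only [hS'def, decide_eq_true_eq] at hlt
    obtain ⟨h1, h2, hS₀t, hOkφ⟩ := hlt
    obtain ⟨l', hl', hfalse⟩ := hOkφ φ hφ
    refine ⟨l', hl', ?_⟩
    obtain ⟨hDlo, hDhi⟩ := abs_le.1 (hD l φ hφ l' hl')
    have hTpcast : (Tp:ℤ) = (T:ℤ) + (Dstar:ℤ) := by push_cast [hTpdef]; ring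
    have hmm : (t + D l l') % (Tp:ℤ) = t % (Tp:ℤ) + D l l' := by
      have ht' : t + D l l' = (t % (Tp:ℤ) + D l l') + (Tp:ℤ) * (t / (Tp:ℤ)) := by
        have := Int.mul_ediv_add_emod t (Tp:ℤ); linarith
      rw [ht', Int.add_mul_emod_self_left, Int.emod_eq_of_lt (by omega) (by omega)]
    simp only [hS'def, decide_eq_false_iff_not]
    rintro ⟨-, -, hOk', -⟩
    rw [hmm] at hOk'
    rw [hOk'] at hfalse
    exact absurd hfalse (by simp)
  refine ⟨S', Tp, hTp1, hper, hCF, ?_⟩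
  -- rates
  refine ⟨fun l => (∑ t ∈ Finset.range Tp,
      (if S' l (t:ℤ) = true then (1:ℝ) else 0)) / Tp, ?_, ?_⟩
  · intro l
    have hrate : ∀ N, rateAvg I D S' l N
        = (∑ t ∈ Finset.range N, (if S' l (t:ℤ) = true then (1:ℝ) else 0)) / N := by
      intro N
      unfold rateAvg
      congr 1
      refine Finset.sum_congr rfl fun t _ => ?_
      by_cases h : S' l (t:ℤ) = true
      · rw [if_pos ⟨h, hCF l (t:ℤ) h⟩, if_pos h]
      · rw [if_neg (fun hc => h hc.1), if_neg h]
    have hperg : ∀ t : ℕ, (if S' l ((t + Tp : ℕ):ℤ) = true then (1:ℝ) else 0)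
        = (if S' l (t:ℤ) = true then (1:ℝ) else 0) := by
      intro t
      have : ((t + Tp : ℕ):ℤ) = (t:ℤ) + (Tp:ℤ) := by push_cast; ring
      rw [this, hper l (t:ℤ)]
    have h0g : ∀ t : ℕ, (0:ℝ) ≤ (if S' l (t:ℤ) = true then (1:ℝ) else 0) := by
      intro t; split <;> norm_num
    have h1g : ∀ t : ℕ, (if S' l (t:ℤ) = true then (1:ℝ) else 0) ≤ 1 := by
      intro t; split <;> norm_num
    have := cesaro_periodic (fun t : ℕ => if S' l (t:ℤ) = true then (1:ℝ) else 0) Tp hTp1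
      h0g h1g hperg
    exact Tendsto.congr (fun N => (hrate N).symm) this
  · intro l
    have hRr : R l - ε/2 ≤ r l := hge l
    have hrl1 : r l ≤ 1 := hr1 l
    have hmodid : ∀ t : ℕ, t < Tp → ((t:ℤ) % (Tp:ℤ)) = (t:ℤ) := by
      intro t ht
      exact Int.emod_eq_of_lt (by positivity) (by exact_mod_cast ht)
    -- the per-window sum of successful slots of S₀ is large
    have hsum_lower : (r l - ε/4) * T
        ≤ ∑ t ∈ Finset.range T, (if S₀ l (t:ℤ) = true ∧ ∀ φ ∈ I l, ∃ l' ∈ φ, S₀ l' ((t:ℤ) + D l l') = false then (1:ℝ) else 0) := by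
      have h1 := (hT1 l).le
      have h2 : rateAvg I D S₀ l T = (∑ t ∈ Finset.range T,
          (if S₀ l (t:ℤ) = true ∧ ∀ φ ∈ I l, ∃ l' ∈ φ, S₀ l' ((t:ℤ) + D l l') = false
            then (1:ℝ) else 0)) / T := by
        rw [rateAvg]
        congr 1
        exact Finset.sum_congr rfl fun t _ => ite_irrel _ _ _ _ _
      rw [h2] at h1
      exact (le_div_iff₀ hTR).1 h1
    -- compare with the sum of active slots of S'
    have hterm : ∀ t : ℕ, t < T →
        (if S₀ l (t:ℤ) = true ∧ ∀ φ ∈ I l, ∃ l' ∈ φ, S₀ l' ((t:ℤ) + D l l') = false then (1:ℝ) else 0)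
          ≤ (if S' l (t:ℤ) = true then (1:ℝ) else 0) + (if t < Dstar then (1:ℝ) else 0) := by
      intro t ht
      have htTp : t < Tp := by omega
      by_cases hOk : S₀ l (t:ℤ) = true ∧ ∀ φ ∈ I l, ∃ l' ∈ φ, S₀ l' ((t:ℤ) + D l l') = false
      · by_cases hDt : Dstar ≤ t
        · have : S' l (t:ℤ) = true := by
            simp only [hS'def, decide_eq_true_eq, hmodid t htTp]
            exact ⟨by exact_mod_cast hDt, by exact_mod_cast ht, hOk⟩
          rw [if_pos hOk, if_pos this]
          split <;> norm_num
        · rw [if_pos hOk, if_pos (show t < Dstar by omega)]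
          split <;> norm_num
      · rw [if_neg hOk]
        positivity
    have hDsum : ∑ t ∈ Finset.range T, (if t < Dstar then (1:ℝ) else 0) ≤ Dstar := by
      rw [Finset.sum_boole]
      have : (Finset.range T).filter (fun t => t < Dstar) ⊆ Finset.range Dstar := by
        intro t ht
        simp only [Finset.mem_filter, Finset.mem_range] at ht ⊢
        exact ht.2
      have := Finset.card_le_card this
      rw [Finset.card_range] at this
      exact_mod_cast this
    have hsub : ∑ t ∈ Finset.range T, (if S' l (t:ℤ) = true then (1:ℝ) else 0)
        ≤ ∑ t ∈ Finset.range Tp, (if S' l (t:ℤ) = true then (1:ℝ) else 0) := by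
      refine Finset.sum_le_sum_of_subset_of_nonneg (Finset.range_subset_range.2 (by omega)) ?_
      intro i _ _
      positivity
    have hA_ge : (r l - ε/4) * T - Dstar
        ≤ ∑ t ∈ Finset.range Tp, (if S' l (t:ℤ) = true then (1:ℝ) else 0) := by
      have step : ∑ t ∈ Finset.range T, (if S₀ l (t:ℤ) = true ∧ ∀ φ ∈ I l, ∃ l' ∈ φ, S₀ l' ((t:ℤ) + D l l') = false then (1:ℝ) else 0)
          ≤ (∑ t ∈ Finset.range T, (if S' l (t:ℤ) = true then (1:ℝ) else 0)) + Dstar := by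
        calc ∑ t ∈ Finset.range T, (if S₀ l (t:ℤ) = true ∧ ∀ φ ∈ I l, ∃ l' ∈ φ, S₀ l' ((t:ℤ) + D l l') = false then (1:ℝ) else 0)
            ≤ ∑ t ∈ Finset.range T, ((if S' l (t:ℤ) = true then (1:ℝ) else 0)
                + (if t < Dstar then (1:ℝ) else 0)) := by
              refine Finset.sum_le_sum fun t ht => hterm t (Finset.mem_range.1 ht)
          _ = (∑ t ∈ Finset.range T, (if S' l (t:ℤ) = true then (1:ℝ) else 0))
                + ∑ t ∈ Finset.range T, (if t < Dstar then (1:ℝ) else 0) :=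
              Finset.sum_add_distrib
          _ ≤ _ := by linarith [hDsum]
      linarith [hsum_lower, hsub]
    have hA0 : (0:ℝ) ≤ ∑ t ∈ Finset.range Tp, (if S' l (t:ℤ) = true then (1:ℝ) else 0) := by
      positivity
    have hTpR : (0:ℝ) < (Tp:ℝ) := by exact_mod_cast hTp1
    rw [le_div_iff₀ hTpR]
    have hTpcast : (Tp:ℝ) = (T:ℝ) + (Dstar:ℝ) := by push_cast [hTpdef]; ring
    have hDs0 : (0:ℝ) ≤ (Dstar:ℝ) := by positivity
    rcases le_or_gt (r l - ε/2) 0 with hcase | hcase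
    · have : (R l - ε) * (Tp:ℝ) ≤ 0 := by
        apply mul_nonpos_of_nonpos_of_nonneg <;> nlinarith
      linarith
    · rw [hTpcast]
      nlinarith [mul_nonneg hDs0 (show (0:ℝ) ≤ 1 - r l by linarith),
        mul_nonneg hε.le hDs0, mul_nonneg hε.le hTR.le]
end

section
/- Consider a network with binary collision profile and a framed schedule S of frame length T_F ≥ 2D* + 1. Then S is collision free if and only if for every frame k and every link l active in frame k, every link l' ∈ I(l) is inactive in frame k. -/
/-- A framed schedule of frame length `TF` with guard interval `Dstar`:
all links are inactive before time `0`; in each frame `k` every link is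
inactive during the last `Dstar` slots, and is constant (all active or all
inactive) over the first `TF − Dstar` slots. -/
def Framed {L : Type*} (Dstar TF : ℕ) (S : L → ℤ → Bool) : Prop :=
  (∀ l (t : ℤ), t < 0 → S l t = false) ∧
  (∀ l (k i : ℕ), TF - Dstar ≤ i → i < TF → S l ((k : ℤ) * TF + i) = false) ∧
  (∀ l (k i j : ℕ), i < TF - Dstar → j < TF - Dstar →
    S l ((k : ℤ) * TF + i) = S l ((k : ℤ) * TF + j))

/-- If a link is inactive at the start of a frame, it is inactive throughout. -/
lemma framed_inactive_frame {L : Type*} {Dstar TF : ℕ} {S : L → ℤ → Bool}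
    (hS : Framed Dstar TF S) (hpos : 0 < TF - Dstar) (l : L) (k j : ℕ)
    (hj : j < TF) (h0 : S l ((k : ℤ) * TF) = false) :
    S l ((k : ℤ) * TF + j) = false := by
  by_cases hc : j < TF - Dstar
  · have h := hS.2.2 l k j 0 hc hpos
    rw [show ((k : ℤ) * TF + ((0:ℕ):ℤ)) = (k : ℤ) * TF by push_cast; ring] at h
    rw [h, h0]
  · exact hS.2.1 l k j (by omega) hj

/-- binary collision profile, `TF ≥ 2D* + 1`; a framed schedule is
collision free iff whenever a link `l` is active in a frame, every `l' ∈ I l`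
is inactive in the same frame. -/
theorem stmt_8 {L : Type*} (I : L → Set L) (D : L → L → ℤ)
    (Dstar TF : ℕ) (hD : ∀ l, ∀ l' ∈ I l, |D l l'| ≤ (Dstar : ℤ))
    (hTF : 2 * Dstar + 1 ≤ TF)
    (S : L → ℤ → Bool) (hS : Framed Dstar TF S) :
    CollisionFreeB I D S ↔
      ∀ (k : ℕ) (l : L), S l ((k : ℤ) * TF) = true →
        ∀ l' ∈ I l, S l' ((k : ℤ) * TF) = false := by
  have hpos : 0 < TF - Dstar := by omega
  constructor
  · intro hCF k l hl l' hl'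
    obtain ⟨hd1, hd2⟩ := abs_le.mp (hD l l' hl')
    set d := D l l' with hdd
    -- pick the slot i = max(-d,0) in frame k
    set i : ℕ := (-d).toNat with hii
    have hi : (i : ℤ) = max (-d) 0 := Int.toNat_eq_max (-d)
    have hiD : i ≤ Dstar := by omega
    have hilt : i < TF - Dstar := by omega
    have hact : S l ((k : ℤ) * TF + i) = true := by
      have h := hS.2.2 l k i 0 hilt hpos
      rw [show ((k : ℤ) * TF + ((0:ℕ):ℤ)) = (k : ℤ) * TF by push_cast; ring] at h
      rw [h, hl]
    have hCFapp := hCF l _ hact l' hl'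
    set j : ℕ := ((i : ℤ) + d).toNat with hjj
    have hjd : (j : ℤ) = (i : ℤ) + d := by omega
    have hjlt : j < TF - Dstar := by omega
    have hfalse : S l' ((k : ℤ) * TF + j) = false := by
      rw [show ((k : ℤ) * TF + j) = ((k : ℤ) * TF + i + d) by rw [hjd]; ring]
      exact hCFapp
    have h := hS.2.2 l' k 0 j hpos hjlt
    rw [show ((k : ℤ) * TF + ((0:ℕ):ℤ)) = (k : ℤ) * TF by push_cast; ring] at h
    rw [h, hfalse]
  · intro h l t ht l' hl'
    obtain ⟨hd1, hd2⟩ := abs_le.mp (hD l l' hl')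
    set d := D l l' with hdd
    have ht0 : 0 ≤ t := by
      by_contra hneg
      rw [hS.1 l t (by omega)] at ht; exact absurd ht (by simp)
    have hTFpos : (0 : ℤ) < (TF : ℤ) := by exact_mod_cast (by omega : 0 < TF)
    -- decompose t = k*TF + i
    obtain ⟨k, i, hilt, hteq⟩ : ∃ (k i : ℕ), i < TF ∧ t = (k : ℤ) * TF + i := by
      refine ⟨(t / TF).toNat, (t % TF).toNat, ?_, ?_⟩
      · have h1 := Int.emod_lt_of_pos t hTFpos
        have h2 := Int.emod_nonneg t (by omega : (TF : ℤ) ≠ 0)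
        omega
      · have h1 := Int.mul_ediv_add_emod t (TF : ℤ)
        have h2 := Int.emod_nonneg t (by omega : (TF : ℤ) ≠ 0)
        have h3 : 0 ≤ t / (TF : ℤ) := Int.ediv_nonneg ht0 (le_of_lt hTFpos)
        rw [Int.toNat_of_nonneg h3, Int.toNat_of_nonneg h2, mul_comm]
        omega
    have hicore : i < TF - Dstar := by
      by_contra hc
      have := hS.2.1 l k i (by omega) hilt
      rw [← hteq] at this
      rw [this] at ht; exact absurd ht (by simp)
    have hstart : S l ((k : ℤ) * TF) = true := by
      have hcc := hS.2.2 l k i 0 hicore hpos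
      rw [show ((k : ℤ) * TF + ((0:ℕ):ℤ)) = (k : ℤ) * TF by push_cast; ring] at hcc
      rw [← hcc, ← hteq, ht]
    have h0 := h k l hstart l' hl'
    -- t + d = k*TF + (i + d)
    have hm1 : (i : ℤ) + d < TF := by omega
    by_cases hmn : 0 ≤ (i : ℤ) + d
    · set m : ℕ := ((i : ℤ) + d).toNat with hmm
      have hmd : (m : ℤ) = (i : ℤ) + d := by omega
      have := framed_inactive_frame hS hpos l' k m (by omega) h0
      rw [show ((k : ℤ) * TF + m) = t + d by rw [hmd, hteq]; ring] at this
      exact this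
    · -- i + d < 0 : lands in guard of previous frame (or before time 0)
      rcases Nat.eq_zero_or_pos k with hk0 | hkpos
      · exact hS.1 l' (t + d) (by subst hk0; simp at hteq; omega)
      · set m : ℕ := ((TF : ℤ) + i + d).toNat with hmm
        have hmd : (m : ℤ) = (TF : ℤ) + i + d := by omega
        have hg := hS.2.1 l' (k - 1) m (by omega) (by omega)
        have hcast : (((k - 1 : ℕ)) : ℤ) = (k : ℤ) - 1 := by omega
        rw [show (((k - 1 : ℕ) : ℤ) * TF + m) = t + d by
          rw [hcast, hmd, hteq]; ring] at hg
        exact hg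
end

section
/- Consider a network with general collision profile and a framed schedule S of frame length T_F ≥ 3D* + 1. Then S is collision free if and only if for every frame k and every link l active in frame k, for every collision set φ ∈ I(l) there is some l' ∈ φ inactive in frame k. -/
/-- general collision profile, `TF ≥ 3D* + 1`; a framed schedule
is collision free iff whenever a link `l` is active in a frame, every
collision set `φ ∈ I l` contains a link inactive in the same frame. -/
theorem stmt_9 {L : Type*} (I : L → Set (Set L)) (D : L → L → ℤ)
    (Dstar TF : ℕ) (hD : ∀ l, ∀ φ ∈ I l, ∀ l' ∈ φ, |D l l'| ≤ (Dstar : ℤ))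
    (hTF : 3 * Dstar + 1 ≤ TF)
    (S : L → ℤ → Bool) (hS : Framed Dstar TF S) :
    CollisionFree I D S ↔
      ∀ (k : ℕ) (l : L), S l ((k : ℤ) * TF) = true →
        ∀ φ ∈ I l, ∃ l' ∈ φ, S l' ((k : ℤ) * TF) = false := by
  obtain ⟨hneg, hguard, hconst⟩ := hS
  have hTFpos : 0 < TF := by omega
  constructor
  · intro hCF k l hl φ hφ
    have hlt : S l ((k : ℤ) * TF + (Dstar : ℤ)) = true := by
      have h0 := hconst l k 0 Dstar (by omega) (by omega)
      simp only [Nat.cast_zero, add_zero] at h0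
      rw [← h0]; exact hl
    obtain ⟨l', hl', hf⟩ := hCF l ((k : ℤ) * TF + Dstar) hlt φ hφ
    refine ⟨l', hl', ?_⟩
    have hd := hD l φ hφ l' hl'
    rw [abs_le] at hd
    set d := D l l' with hdd
    have hj0 : (0:ℤ) ≤ (Dstar:ℤ) + d := by omega
    set j : ℕ := ((Dstar:ℤ) + d).toNat with hjdef
    have hj : (j : ℤ) = (Dstar:ℤ) + d := Int.toNat_of_nonneg hj0
    have hc := hconst l' k 0 j (by omega) (by omega)
    simp only [Nat.cast_zero, add_zero] at hc
    rw [hc]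
    have heq : (k : ℤ) * TF + j = (k : ℤ) * TF + Dstar + d := by rw [hj]; ring
    rw [heq]; exact hf
  · intro h l t hlt φ hφ
    have ht0 : 0 ≤ t := by
      by_contra hc
      rw [hneg l t (by omega)] at hlt; exact Bool.false_ne_true hlt
    obtain ⟨k, i, hiTF, htk⟩ : ∃ k i : ℕ, i < TF ∧ (k : ℤ) * TF + i = t := by
      refine ⟨t.toNat / TF, t.toNat % TF, Nat.mod_lt _ hTFpos, ?_⟩
      have h1 : TF * (t.toNat / TF) + t.toNat % TF = t.toNat := Nat.div_add_mod t.toNat TF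
      have : ((TF * (t.toNat / TF) + t.toNat % TF : ℕ) : ℤ) = t := by
        rw [h1]; exact Int.toNat_of_nonneg ht0
      rw [Nat.cast_add, Nat.cast_mul] at this; linarith
    have hi : i < TF - Dstar := by
      by_contra hc
      have := hguard l k i (by omega) hiTF
      rw [htk] at this; rw [this] at hlt; exact Bool.false_ne_true hlt
    have hact : S l ((k : ℤ) * TF) = true := by
      have h0 := hconst l k i 0 hi (by omega)
      simp only [Nat.cast_zero, add_zero] at h0
      rw [← h0, htk]; exact hlt
    obtain ⟨l', hl', hf⟩ := h k l hact φ hφ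
    refine ⟨l', hl', ?_⟩
    have hd := hD l φ hφ l' hl'
    rw [abs_le] at hd
    set d := D l l' with hdd
    rw [← htk]
    rcases lt_trichotomy ((i:ℤ) + d) 0 with hc1 | hc1 | hc1
    · -- i + d < 0
      rcases Nat.eq_zero_or_pos k with hk0 | hk0
      · apply hneg
        subst hk0; simp only [Nat.cast_zero, zero_mul, zero_add]; omega
      · obtain ⟨m, rfl⟩ : ∃ m, k = m + 1 := ⟨k - 1, by omega⟩
        set j : ℕ := ((TF:ℤ) + i + d).toNat with hjdef
        have hj : (j : ℤ) = (TF:ℤ) + i + d := Int.toNat_of_nonneg (by omega)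
        have hg := hguard l' m j (by omega) (by omega)
        have heq : ((m:ℕ) : ℤ) * TF + j = ((m + 1 : ℕ) : ℤ) * TF + i + d := by
          rw [hj]; push_cast; ring
        rw [heq] at hg; exact hg
    all_goals {
      set j : ℕ := ((i:ℤ) + d).toNat with hjdef
      have hj : (j : ℤ) = (i:ℤ) + d := Int.toNat_of_nonneg (by omega)
      have heq : (k : ℤ) * TF + j = (k : ℤ) * TF + i + d := by rw [hj]; ring
      by_cases hcase : j < TF - Dstar
      · have hc2 := hconst l' k j 0 hcase (by omega)
        simp only [Nat.cast_zero, add_zero] at hc2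
        rw [← heq, hc2]; exact hf
      · have hg := hguard l' k j (by omega) (by omega)
        rw [heq] at hg; exact hg
    }
end

section
/- For a network N with binary collision profile, the rate vector of any collision-free framed schedule of frame length T_F ≥ 2D* + 1, when it exists, lies in (1 − D*/T_F) · conv(indicator vectors of independent sets of the conflict graph (L, I)), and in particular in the convex hull of indicator vectors of independent sets of (L, I). -/
open scoped Classical

open Filter
open scoped Pointwise

/-- Independent set of the conflict graph `(L, I)`. -/
def IndepB {L : Type*} (I : L → Set L) (A : Set L) : Prop :=
  ∀ l ∈ A, ∀ l' ∈ I l, l' ∉ A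

/-- Indicator vector of a subset of links. -/
noncomputable def indVec {L : Type*} (A : Set L) : L → ℝ :=
  fun l => if l ∈ A then 1 else 0

/-- Average over `t = 0, …, T−1` of the indicator of collision-free activity. -/
noncomputable def rateAvgB {L : Type*} (I : L → Set L) (D : L → L → ℤ)
    (S : L → ℤ → Bool) (l : L) (T : ℕ) : ℝ :=
  (∑ t ∈ Finset.range T,
      if S l (t : ℤ) = true ∧ ∀ l' ∈ I l, S l' ((t : ℤ) + D l l') = false
      then (1 : ℝ) else 0) / T

/-- the rate vector of a collision-free framed schedule of frame
length `TF ≥ 2D* + 1`, when it exists, lies in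
`(1 − D*/TF) · conv{indicators of independent sets}` and hence in
`conv{indicators of independent sets}`. -/
theorem stmt_10 {L : Type*} [Fintype L] (I : L → Set L) (D : L → L → ℤ)
    (Dstar TF : ℕ) (hD : ∀ l, ∀ l' ∈ I l, |D l l'| ≤ (Dstar : ℤ))
    (hTF : 2 * Dstar + 1 ≤ TF)
    (S : L → ℤ → Bool) (hS : Framed Dstar TF S)
    (hcf : CollisionFreeB I D S)
    (r : L → ℝ) (hr : ∀ l, Tendsto (rateAvgB I D S l) atTop (nhds (r l))) :
    r ∈ (1 - (Dstar : ℝ) / TF) •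
        convexHull ℝ {f : L → ℝ | ∃ A, IndepB I A ∧ f = indVec A} ∧
    r ∈ convexHull ℝ {f : L → ℝ | ∃ A, IndepB I A ∧ f = indVec A} := by
  classical
  obtain ⟨hneg, hguard, hconst⟩ := hS
  set m : ℕ := TF - Dstar with hm
  have hDm : Dstar < m := by omega
  have hTFm : TF = m + Dstar := by omega
  have hm0 : 0 < m := by omega
  have hTF0 : 0 < TF := by omega
  set A : ℕ → Set L := fun k => {l | S l ((k : ℤ) * TF) = true} with hA
  -- constancy of each frame's active part
  have hc : ∀ (l : L) (k i : ℕ), i < m → S l ((k : ℤ) * TF + i) = S l ((k : ℤ) * TF) := by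
    intro l k i hi
    have := hconst l k i 0 (by omega) (by omega)
    simpa using this
  -- each frame's active set is independent
  have hindep : ∀ k, IndepB I (A k) := by
    intro k l hl l' hI' hl'
    have hl : S l ((k : ℤ) * TF) = true := hl
    have hl' : S l' ((k : ℤ) * TF) = true := hl'
    have hDb := hD l l' hI'
    rw [abs_le] at hDb
    rcases le_or_gt 0 (D l l') with hd | hd
    · have hfalse := hcf l ((k : ℤ) * TF) hl l' hI'
      have hi : ((D l l').toNat : ℤ) = D l l' := Int.toNat_of_nonneg hd
      rw [← hi, hc l' k (D l l').toNat (by omega), hl'] at hfalse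
      simp at hfalse
    · have hact : S l ((k : ℤ) * TF + (Dstar : ℕ)) = true := by
        rw [hc l k Dstar hDm]; exact hl
      have hfalse := hcf l ((k : ℤ) * TF + (Dstar : ℕ)) hact l' hI'
      have hj : ((((Dstar : ℤ) + D l l').toNat : ℤ)) = (Dstar : ℤ) + D l l' :=
        Int.toNat_of_nonneg (by omega)
      have heq : ((k : ℤ) * TF + (Dstar : ℕ) + D l l')
          = (k : ℤ) * TF + ((((Dstar : ℤ) + D l l').toNat : ℕ) : ℤ) := by
        push_cast [hj]; ring
      rw [heq, hc l' k _ (by omega), hl'] at hfalse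
      simp at hfalse
  -- the key sum computation
  have hsum : ∀ (l : L) (n : ℕ),
      (∑ t ∈ Finset.range (n * TF),
        if S l (t : ℤ) = true then (1 : ℝ) else 0)
      = m * ∑ k ∈ Finset.range n, indVec (A k) l := by
    intro l n
    induction n with
    | zero => simp
    | succ n ih =>
      rw [Nat.succ_mul, Finset.sum_range_add, ih, Finset.sum_range_succ, mul_add]
      congr 1
      have hframe : ∀ i : ℕ, i < TF →
          (if S l ((n * TF + i : ℕ) : ℤ) = true then (1 : ℝ) else 0)
          = if i < m then indVec (A n) l else 0 := by
        intro i hi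
        have hcast : ((n * TF + i : ℕ) : ℤ) = (n : ℤ) * TF + (i : ℕ) := by push_cast; ring
        rw [hcast]
        by_cases him : i < m
        · rw [hc l n i him, if_pos him]
          by_cases hSl : S l ((n : ℤ) * TF) = true
          · simp [hSl, indVec, hA, Set.mem_setOf_eq]
          · simp [hSl, indVec, hA, Set.mem_setOf_eq]
        · rw [hguard l n i (by omega) hi, if_neg him]
          simp
      calc (∑ i ∈ Finset.range TF,
              if S l ((n * TF + i : ℕ) : ℤ) = true then (1 : ℝ) else 0)
          = ∑ i ∈ Finset.range TF, if i < m then indVec (A n) l else 0 :=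
            Finset.sum_congr rfl fun i hi => hframe i (Finset.mem_range.mp hi)
        _ = ∑ i ∈ Finset.range m, indVec (A n) l := by
            rw [hTFm, Finset.sum_range_add]
            have h2 : ∑ i ∈ Finset.range Dstar,
                (if m + i < m then indVec (A n) l else 0) = 0 := by
              apply Finset.sum_eq_zero; intro i _; rw [if_neg (by omega)]
            rw [h2, add_zero]
            exact Finset.sum_congr rfl fun i hi =>
              if_pos (Finset.mem_range.mp hi)
        _ = (m : ℝ) * indVec (A n) l := by
            rw [Finset.sum_const, Finset.card_range, nsmul_eq_mul]
  -- the set of indicator vectors of independent sets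
  have hrate : ∀ (l : L) (n : ℕ), rateAvgB I D S l (n * TF)
      = (m * ∑ k ∈ Finset.range n, indVec (A k) l) / ((n : ℝ) * TF) := by
    intro l n
    rw [rateAvgB]
    trans ((∑ t ∈ Finset.range (n * TF),
        if S l (t : ℤ) = true then (1 : ℝ) else 0) / ((n * TF : ℕ) : ℝ))
    · refine congrArg (fun x : ℝ => x / ((n * TF : ℕ) : ℝ)) ?_
      refine Finset.sum_congr rfl fun t _ => ?_
      by_cases h : S l (t : ℤ) = true
      · rw [if_pos ⟨h, fun l' hl' => hcf l (t : ℤ) h l' hl'⟩, if_pos h]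
      · rw [if_neg (fun hco => h hco.1), if_neg h]
    · rw [hsum l n]
      push_cast
      ring
  set s : Set (L → ℝ) := {f : L → ℝ | ∃ A, IndepB I A ∧ f = indVec A} with hset
  have hsfin : s.Finite := by
    apply Set.Finite.subset (Set.finite_range (indVec (L := L)))
    rintro f ⟨B, _, rfl⟩
    exact ⟨B, rfl⟩
  have hclosed : IsClosed (convexHull ℝ s) := hsfin.isClosed_convexHull (𝕜 := ℝ)
  -- averages of frame indicators
  set g : ℕ → L → ℝ := fun n => (n : ℝ)⁻¹ • ∑ k ∈ Finset.range n, indVec (A k) with hg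
  have hmem : ∀ n : ℕ, 1 ≤ n → g n ∈ convexHull ℝ s := by
    intro n hn
    have hw0 : ∀ i ∈ Finset.range n, (0 : ℝ) ≤ (fun _ : ℕ => (1 : ℝ)) i :=
      fun i _ => zero_le_one
    have hws : (0 : ℝ) < ∑ i ∈ Finset.range n, (fun _ : ℕ => (1 : ℝ)) i := by
      simp only [Finset.sum_const, Finset.card_range, nsmul_eq_mul, mul_one]
      exact_mod_cast hn
    have hz : ∀ i ∈ Finset.range n, (fun k => indVec (A k)) i ∈ s :=
      fun i _ => ⟨A i, hindep i, rfl⟩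
    have hcm := Finset.centerMass_mem_convexHull (Finset.range n) hw0 hws hz
    have hgeq : (Finset.range n).centerMass (fun _ : ℕ => (1 : ℝ))
        (fun k => indVec (A k)) = g n := by
      rw [Finset.centerMass]
      simp [hg]
    rwa [hgeq] at hcm
  -- limit of the averages
  set c : L → ℝ := fun l => r l * ((TF : ℝ) / m) with hcdef
  have hmR : (m : ℝ) ≠ 0 := by positivity
  have hTFR : (TF : ℝ) ≠ 0 := by positivity
  have htend : Tendsto g atTop (nhds c) := by
    rw [tendsto_pi_nhds]
    intro l
    have hmul : Tendsto (fun n : ℕ => n * TF) atTop atTop :=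
      tendsto_atTop_mono (fun n => Nat.le_mul_of_pos_right n hTF0) tendsto_id
    have h1 : Tendsto (fun n : ℕ => rateAvgB I D S l (n * TF)) atTop (nhds (r l)) :=
      (hr l).comp hmul
    have h2 : Tendsto (fun n : ℕ => rateAvgB I D S l (n * TF) * ((TF : ℝ) / m))
        atTop (nhds (c l)) := h1.mul_const _
    apply h2.congr'
    filter_upwards [eventually_ge_atTop 1] with n hn
    have hnR : (n : ℝ) ≠ 0 := by
      have : 0 < n := hn
      positivity
    rw [hrate l n]
    simp only [hg, Pi.smul_apply, Finset.sum_apply, smul_eq_mul]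
    field_simp
  have hcmem : c ∈ convexHull ℝ s := by
    refine hclosed.mem_of_tendsto htend ?_
    filter_upwards [eventually_ge_atTop 1] with n hn
    exact hmem n hn
  have hmcast : (m : ℝ) = (TF : ℝ) - (Dstar : ℝ) := by
    have : ((TF : ℕ) : ℝ) = ((m + Dstar : ℕ) : ℝ) := by rw [← hTFm]
    push_cast at this
    linarith
  have hr_eq : r = (1 - (Dstar : ℝ) / TF) • c := by
    funext l
    show r l = (1 - (Dstar : ℝ) / TF) * c l
    rw [hcdef]
    have h1 : (1 : ℝ) - (Dstar : ℝ) / TF = (m : ℝ) / TF := by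
      rw [hmcast]; field_simp
    rw [h1]
    field_simp
  constructor
  · rw [Set.mem_smul_set]
    exact ⟨c, hcmem, hr_eq.symm⟩
  · have h0 : (0 : L → ℝ) ∈ convexHull ℝ s := by
      apply subset_convexHull
      refine ⟨∅, fun l hl => absurd hl (Set.notMem_empty l), ?_⟩
      funext l; simp [indVec]
    have hconv := convex_convexHull ℝ s
    have hDTF : (0 : ℝ) ≤ (Dstar : ℝ) / TF := by positivity
    have hmTFle : (0 : ℝ) ≤ 1 - (Dstar : ℝ) / TF := by
      rw [sub_nonneg, div_le_one (by positivity)]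
      have : Dstar ≤ TF := by omega
      exact_mod_cast this
    have := hconv hcmem h0 hmTFle hDTF (by ring)
    rw [smul_zero, add_zero] at this
    rwa [hr_eq]
end

section
/- Every rate vector in the convex hull of indicator vectors of independent sets of the conflict graph (L, I) is achievable by collision-free framed schedules: for any such R and ε > 0, there is a collision-free framed schedule S of some frame length T_F ≥ 2D* + 1 (binary collision case) with R_S ≥ R − ε componentwise. -/
open scoped Classical

open Filter

lemma tendsto_avg_periodic (g : ℕ → ℝ) (P : ℕ) (hP : 0 < P)
    (hg : ∀ n, g (n + P) = g n) :
    Tendsto (fun T : ℕ => (∑ u ∈ Finset.range T, g u) / T) atTop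
      (nhds ((∑ u ∈ Finset.range P, g u) / P)) := by
  set c : ℝ := ∑ u ∈ Finset.range P, g u with hc
  set f : ℕ → ℝ := fun T => ∑ u ∈ Finset.range T, g u with hf
  have h1 : ∀ n, f (n + P) = f n + c := by
    intro n
    induction n with
    | zero => simp [f, c]
    | succ n ih =>
        have e : n + 1 + P = (n + P) + 1 := by ring
        rw [e]
        show (∑ u ∈ Finset.range ((n+P)+1), g u) = _
        rw [Finset.sum_range_succ]
        have h4 : f (n+1) = f n + g n := by
          show (∑ u ∈ Finset.range (n+1), g u) = _
          rw [Finset.sum_range_succ]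
        rw [show (∑ u ∈ Finset.range (n+P), g u) = f (n+P) from rfl, ih, hg, h4]
        ring
  have h3 : ∀ n : ℕ, f n = f (n % P) + (n / P : ℕ) * c := by
    have h2 : ∀ (q r : ℕ), f (r + q * P) = f r + q * c := by
      intro q
      induction q with
      | zero => simp
      | succ q ih =>
          intro r
          have e : r + (q+1) * P = (r + q * P) + P := by ring
          rw [e, h1, ih]
          push_cast
          ring
    intro n
    conv_lhs => rw [← Nat.mod_add_div n P, mul_comm P (n / P)]
    exact h2 _ _
  set C : ℝ := (∑ r ∈ Finset.range P, |f r|) + |c| with hC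
  have key : Tendsto (fun n : ℕ => f n / n - c / P) atTop (nhds 0) := by
    apply squeeze_zero_norm' (a := fun n : ℕ => C / n)
    · filter_upwards [eventually_ge_atTop 1] with n hn
      have hn0 : (0:ℝ) < n := by exact_mod_cast hn
      have hP0 : (0:ℝ) < P := by exact_mod_cast hP
      have hmod : n % P < P := Nat.mod_lt _ hP
      have hdiv : ((n / P : ℕ) : ℝ) = ((n:ℝ) - ((n % P : ℕ):ℝ)) / P := by
        have h5 : ((n % P : ℕ):ℝ) + P * ((n / P : ℕ):ℝ) = n := by
          exact_mod_cast Nat.mod_add_div n P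
        field_simp
        linarith
      have e : f n / n - c / P = (f (n % P) - (c / P) * ((n % P : ℕ):ℝ)) / n := by
        rw [h3 n, hdiv]
        field_simp
        ring
      rw [e, norm_div, Real.norm_natCast]
      gcongr
      calc ‖f (n % P) - c / ↑P * ↑(n % P)‖
          ≤ ‖f (n % P)‖ + ‖c / ↑P * ((n % P : ℕ):ℝ)‖ := norm_sub_le _ _
        _ ≤ (∑ r ∈ Finset.range P, |f r|) + |c| := by
            apply add_le_add
            · exact Finset.single_le_sum (f := fun r => |f r|)
                (fun r _ => abs_nonneg _) (Finset.mem_range.2 hmod)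
            · rw [norm_mul, norm_div, Real.norm_natCast, Real.norm_natCast]
              rw [Real.norm_eq_abs, div_mul_eq_mul_div, div_le_iff₀ hP0]
              have : ((n % P : ℕ):ℝ) ≤ (P:ℝ) := by exact_mod_cast hmod.le
              nlinarith [abs_nonneg c]
    · exact tendsto_const_div_atTop_nhds_zero_nat C
  have h6 := key.add_const (c / P)
  simp only [sub_add_cancel, zero_add] at h6
  exact h6

lemma sum_getD_eq {L : Type*} (F : Set L → ℝ) (hF : F ∅ = 0) :
    ∀ (lst : List (Set L)) (N : ℕ), lst.length ≤ N →
      ∑ k ∈ Finset.range N, F (lst.getD k ∅) = (lst.map F).sum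
  | [], N, _ => by simp [hF]
  | X :: xs, N, h => by
    have hN : ∃ N', N = N' + 1 := ⟨N - 1, by simp at h; omega⟩
    obtain ⟨N', rfl⟩ := hN
    rw [Finset.sum_range_succ']
    simp only [List.getD_cons_succ, List.getD_cons_zero, List.map_cons, List.sum_cons]
    rw [sum_getD_eq F hF xs N' (by simp at h; omega)]
    ring

lemma construction {L : Type*} (I : L → Set L) (D : L → L → ℤ) (Dstar : ℕ)
    (hD : ∀ l, ∀ l' ∈ I l, |D l l'| ≤ (Dstar : ℤ))
    (lst : List (Set L)) (hlst : ∀ X ∈ lst, IndepB I X)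
    (N TF : ℕ) (hN : 0 < N) (hlen : lst.length ≤ N) (hTF : 2 * Dstar + 1 ≤ TF) :
    ∃ S : L → ℤ → Bool, Framed Dstar TF S ∧ CollisionFreeB I D S ∧
      ∀ l, Tendsto (rateAvgB I D S l) atTop
        (nhds ((((TF - Dstar : ℕ) : ℝ) *
          ((lst.map (fun X => if l ∈ X then (1:ℝ) else 0)).sum)) / ((N : ℝ) * TF))) := by
  have hTF0 : 0 < TF := by omega
  have hTFZ : (TF : ℤ) ≠ 0 := by exact_mod_cast hTF0.ne'
  have hTFZ0 : (0:ℤ) < TF := by exact_mod_cast hTF0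
  have hcast : ((TF - Dstar : ℕ) : ℤ) = (TF : ℤ) - Dstar := by
    push_cast [Nat.cast_sub (by omega : Dstar ≤ TF)]; ring
  set B : ℕ → Set L := fun k => lst.getD k ∅ with hB
  have hBindep : ∀ k, IndepB I (B k) := by
    intro k
    by_cases hk : k < lst.length
    · have : B k ∈ lst := by
        rw [hB]; simp only
        rw [lst.getD_eq_getElem ∅ hk]
        exact List.getElem_mem hk
      exact hlst _ this
    · have : B k = ∅ := List.getD_eq_default _ _ (by omega)
      rw [this]
      intro x hx
      exact absurd hx (Set.notMem_empty x)
  set S : L → ℤ → Bool := fun l τ =>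
    decide (0 ≤ τ ∧ τ % (TF:ℤ) < ((TF - Dstar : ℕ):ℤ) ∧
      l ∈ B (((τ / (TF:ℤ)) % (N:ℤ)).toNat)) with hS
  have frame : ∀ q v : ℤ, 0 ≤ v → v < TF →
      (q * TF + v) / TF = q ∧ (q * TF + v) % TF = v := by
    intro q v h0 h1
    constructor
    · rw [add_comm, Int.add_mul_ediv_right _ _ hTFZ, Int.ediv_eq_zero_of_lt h0 h1, zero_add]
    · rw [add_comm, Int.add_mul_emod_self_right, Int.emod_eq_of_lt h0 h1]
  -- value of S on frame positions
  have hSval : ∀ (l : L) (k i : ℕ), i < TF - Dstar →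
      S l ((k:ℤ) * TF + i) = decide (l ∈ B ((((k:ℤ)) % (N:ℤ)).toNat)) := by
    intro l k i hi
    have hiTF : (i:ℤ) < TF := by exact_mod_cast (by omega : i < TF)
    have h0 : (0:ℤ) ≤ i := by positivity
    obtain ⟨hdiv, hmod⟩ := frame (k:ℤ) i h0 hiTF
    rw [hS]
    simp only
    rw [decide_eq_decide]
    constructor
    · rintro ⟨-, -, hm⟩; rwa [hdiv] at hm
    · intro hm
      refine ⟨by positivity, ?_, by rwa [hdiv]⟩
      rw [hmod, hcast]
      have : (i:ℤ) < (TF:ℤ) - Dstar := by exact_mod_cast (by omega : (i:ℤ) < ((TF - Dstar:ℕ):ℤ)) |>.trans_le (le_of_eq hcast)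
      exact this
  have hFramed : Framed Dstar TF S := by
    refine ⟨?_, ?_, ?_⟩
    · intro l τ hτ
      apply decide_eq_false
      rintro ⟨h0, -, -⟩
      omega
    · intro l k i h1 h2
      apply decide_eq_false
      rintro ⟨-, hlt, -⟩
      have hiTF : (i:ℤ) < TF := by exact_mod_cast h2
      have h0 : (0:ℤ) ≤ i := by positivity
      rw [(frame (k:ℤ) i h0 hiTF).2] at hlt
      omega
    · intro l k i j hi hj
      rw [hSval l k i hi, hSval l k j hj]
  have hCF : CollisionFreeB I D S := by
    intro l τ hSl l' hl'
    have hprop := of_decide_eq_true hSl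
    obtain ⟨hτ0, hmod, hmem⟩ := hprop
    apply decide_eq_false
    rintro ⟨hs0, hsmod, hsmem⟩
    set d := D l l' with hd
    have hDb : -( Dstar:ℤ) ≤ d ∧ d ≤ Dstar := abs_le.mp (hD l l' hl')
    set q := τ / (TF:ℤ) with hq
    set v := τ % (TF:ℤ) with hv
    have hv0 : 0 ≤ v := Int.emod_nonneg τ hTFZ
    have hτeq : τ = q * TF + v := by rw [hq, hv, mul_comm]; exact (Int.mul_ediv_add_emod τ TF).symm
    have hvlt : v < (TF:ℤ) - Dstar := by rw [← hcast]; exact hmod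
    by_cases hcase : 0 ≤ v + d
    · have h1 : v + d < TF := by omega
      have heq : τ + d = q * TF + (v + d) := by rw [hτeq]; ring
      obtain ⟨hdiv2, hmod2⟩ := frame q (v + d) hcase h1
      rw [heq] at hsmod hsmem
      rw [hmod2] at hsmod
      rw [hdiv2] at hsmem
      by_cases hcase2 : v + d < (TF:ℤ) - Dstar
      · -- same frame, independence
        exact hBindep ((q % (N:ℤ)).toNat) l hmem l' hl' hsmem
      · rw [hcast] at hsmod; omega
    · -- v + d < 0 : previous frame guard
      have h1 : 0 ≤ TF + v + d := by omega
      have h2 : TF + v + d < TF := by omega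
      have heq : τ + d = (q - 1) * TF + (TF + v + d) := by rw [hτeq]; ring
      obtain ⟨hdiv2, hmod2⟩ := frame (q - 1) (TF + v + d) h1 h2
      rw [heq] at hsmod
      rw [hmod2, hcast] at hsmod
      omega
  refine ⟨S, hFramed, hCF, ?_⟩
  intro l
  set F : Set L → ℝ := fun X => if l ∈ X then (1:ℝ) else 0 with hF
  set g : ℕ → ℝ := fun u => if S l (u:ℤ) = true then (1:ℝ) else 0 with hg
  set P : ℕ := N * TF with hP
  have hPpos : 0 < P := Nat.mul_pos hN hTF0
  -- rateAvgB agrees with average of g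
  have hrate : rateAvgB I D S l = fun T => (∑ u ∈ Finset.range T, g u) / T := by
    funext T
    unfold rateAvgB
    congr 1
    apply Finset.sum_congr rfl
    intro u _
    by_cases h : S l (u:ℤ) = true
    · have h2 : ∀ l' ∈ I l, S l' ((u:ℤ) + D l l') = false := fun l' hl' => hCF l u h l' hl'
      rw [if_pos ⟨h, h2⟩, hg]; simp [h]
    · rw [if_neg (by tauto), hg]; simp [h]
  -- periodicity of g
  have hper : ∀ u, g (u + P) = g u := by
    intro u
    rw [hg]
    simp only
    have hc : ((u + P : ℕ) : ℤ) = (u:ℤ) + (N:ℤ) * TF := by push_cast [hP]; ring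
    have hm : ((u:ℤ) + (N:ℤ) * TF) % TF = (u:ℤ) % TF := Int.add_mul_emod_self_right _ _ _
    have hdv : ((u:ℤ) + (N:ℤ) * TF) / TF = (u:ℤ) / TF + N := Int.add_mul_ediv_right _ _ hTFZ
    have h3 : ((u:ℤ)/TF + N) % N = ((u:ℤ)/TF) % N := by
      have h4 := Int.add_mul_emod_self_right (a := (u:ℤ)/TF) (b := 1) (c := (N:ℤ))
      simpa using h4
    have hb : S l ((u + P : ℕ) : ℤ) = S l (u:ℤ) := by
      rw [hc, hS]
      simp only
      rw [decide_eq_decide, hm, hdv, h3]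
      constructor
      · rintro ⟨-, h5, h6⟩; exact ⟨by positivity, h5, h6⟩
      · rintro ⟨-, h5, h6⟩; exact ⟨by positivity, h5, h6⟩
    rw [hb]
  -- sum over one period
  have hsumP : (∑ u ∈ Finset.range P, g u)
      = ((TF - Dstar : ℕ) : ℝ) * ((lst.map F).sum) := by
    have hsplit : ∀ n : ℕ, (∑ u ∈ Finset.range (n * TF), g u)
        = ∑ k ∈ Finset.range n, ∑ v ∈ Finset.range TF, g (k * TF + v) := by
      intro n
      induction n with
      | zero => simp
      | succ n ih => rw [Nat.succ_mul, Finset.sum_range_add, ih, Finset.sum_range_succ]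
    have hinner : ∀ k < N, (∑ v ∈ Finset.range TF, g (k * TF + v))
        = if l ∈ B k then ((TF - Dstar : ℕ) : ℝ) else 0 := by
      intro k hk
      have hkN : ((k:ℤ) % (N:ℤ)).toNat = k := by
        rw [Int.emod_eq_of_lt (by positivity) (by exact_mod_cast hk)]
        exact Int.toNat_natCast k
      have hval : ∀ v < TF, g (k * TF + v)
          = if v < TF - Dstar ∧ l ∈ B k then (1:ℝ) else 0 := by
        intro v hv
        rw [hg]
        simp only
        have hcv : ((k * TF + v : ℕ) : ℤ) = (k:ℤ) * TF + v := by push_cast; ring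
        rw [hcv]
        by_cases h : v < TF - Dstar
        · rw [hSval l k v h, hkN]
          by_cases hm2 : l ∈ B k <;> simp [h, hm2]
        · have hguard := hFramed.2.1 l k v (by omega) hv
          rw [hguard]
          simp [h]
      rw [Finset.sum_congr rfl (fun v hv => hval v (Finset.mem_range.mp hv))]
      by_cases hm2 : l ∈ B k
      · simp only [hm2, and_true, if_pos]
        have hre : Finset.range TF = Finset.range ((TF - Dstar) + Dstar) := by
          rw [Nat.sub_add_cancel (by omega)]
        rw [hre, Finset.sum_range_add]
        have e1 : (∑ v ∈ Finset.range (TF - Dstar), if v < TF - Dstar then (1:ℝ) else 0)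
            = ((TF - Dstar : ℕ) : ℝ) := by
          rw [Finset.sum_congr rfl (fun v hv => if_pos (Finset.mem_range.mp hv))]
          simp
        have e2 : (∑ v ∈ Finset.range Dstar, if (TF - Dstar) + v < TF - Dstar then (1:ℝ) else 0) = 0 := by
          apply Finset.sum_eq_zero
          intro v _
          rw [if_neg (by omega)]
        rw [e1, e2, add_zero]
      · simp [hm2]
    rw [hP, hsplit N, Finset.sum_congr rfl (fun k hk => hinner k (Finset.mem_range.mp hk))]
    have hFe : ∀ k, (if l ∈ B k then ((TF - Dstar : ℕ) : ℝ) else 0)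
        = ((TF - Dstar : ℕ) : ℝ) * F (B k) := by
      intro k
      rw [hF]
      by_cases hm2 : l ∈ B k <;> simp [hm2]
    rw [Finset.sum_congr rfl (fun k _ => hFe k), ← Finset.mul_sum]
    congr 1
    exact sum_getD_eq F (by simp [hF]) lst N hlen
  rw [hrate]
  have := tendsto_avg_periodic g P hPpos hper
  rw [hsumP] at this
  have hPc : ((P:ℕ):ℝ) = (N:ℝ) * TF := by push_cast [hP]; ring
  rw [hPc] at this
  exact this

lemma div_helper' (a b c x : ℝ) (hb : 0 < b) (hc : 0 < c) :
    ((c - a) * x) / (b * c) = x / b - (a / c) * (x / b) := by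
  field_simp


set_option maxHeartbeats 1000000 in
/-- every rate vector in the convex hull of indicator vectors of
independent sets of the conflict graph is achievable by collision-free framed
schedules. -/
theorem stmt_11 {L : Type*} [Fintype L] (I : L → Set L) (D : L → L → ℤ)
    (Dstar : ℕ) (hD : ∀ l, ∀ l' ∈ I l, |D l l'| ≤ (Dstar : ℤ))
    (R : L → ℝ)
    (hR : R ∈ convexHull ℝ {f : L → ℝ | ∃ A, IndepB I A ∧ f = indVec A})
    (ε : ℝ) (hε : 0 < ε) :
    ∃ (TF : ℕ) (S : L → ℤ → Bool), 2 * Dstar + 1 ≤ TF ∧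
      Framed Dstar TF S ∧ CollisionFreeB I D S ∧
      ∃ r : L → ℝ, (∀ l, Tendsto (rateAvgB I D S l) atTop (nhds (r l))) ∧
        ∀ l, R l - ε ≤ r l := by
  rw [convexHull_eq] at hR
  obtain ⟨ι, t, w, z, hw0, hw1, hz, hcm⟩ := hR
  choose A hA1 hA2 using hz
  set ε2 : ℝ := ε / 2 with hε2
  have hε2pos : 0 < ε2 := by positivity
  set m : ℕ := t.card with hm
  set N : ℕ := max 1 ⌈(m:ℝ)/ε2⌉₊ with hN
  set TF : ℕ := max (2*Dstar+1) ⌈(Dstar:ℝ)/ε2⌉₊ with hTF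
  have hNpos : 0 < N := lt_of_lt_of_le one_pos (le_max_left _ _)
  have hTFc : 2*Dstar + 1 ≤ TF := le_max_left _ _
  have hTFpos : 0 < TF := by omega
  have hNr : (0:ℝ) < N := by exact_mod_cast hNpos
  have hTFr : (0:ℝ) < TF := by exact_mod_cast hTFpos
  set A' : {x // x ∈ t} → Set L := fun i => A i.1 i.2 with hA'
  set n : {x // x ∈ t} → ℕ := fun i => ⌊w i.1 * (N:ℝ)⌋₊ with hn
  set lst : List (Set L) :=
    t.attach.toList.flatMap (fun i => List.replicate (n i) (A' i)) with hlst_def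
  have hlst : ∀ X ∈ lst, IndepB I X := by
    intro X hX
    rw [hlst_def, List.mem_flatMap] at hX
    obtain ⟨i, hi, hXi⟩ := hX
    rw [List.eq_of_mem_replicate hXi]
    exact hA1 i.1 i.2
  have hwN : ∀ i : {x // x ∈ t}, 0 ≤ w i.1 * (N:ℝ) :=
    fun i => mul_nonneg (hw0 _ i.2) (Nat.cast_nonneg _)
  have hlen_eq : lst.length = ∑ i ∈ t.attach, n i := by
    rw [hlst_def, List.length_flatMap]
    simp only [List.length_replicate]
    exact Finset.sum_map_toList _ _
  have hsumn : ((∑ i ∈ t.attach, n i : ℕ) : ℝ) ≤ (N:ℝ) := by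
    push_cast
    calc ∑ i ∈ t.attach, ((n i : ℕ):ℝ)
        ≤ ∑ i ∈ t.attach, w i.1 * (N:ℝ) :=
          Finset.sum_le_sum (fun i _ => Nat.floor_le (hwN i))
      _ = (∑ i ∈ t.attach, w i.1) * N := by rw [Finset.sum_mul]
      _ = 1 * N := by rw [Finset.sum_attach t w, hw1]
      _ = N := one_mul _
  have hlen : lst.length ≤ N := by
    rw [hlen_eq]
    exact_mod_cast hsumn
  obtain ⟨S, hFr, hCF, htend⟩ :=
    construction I D Dstar hD lst hlst N TF hNpos hlen hTFc
  refine ⟨TF, S, hTFc, hFr, hCF,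
    fun l => ((TF - Dstar : ℕ):ℝ) *
      (List.map (fun X => if l ∈ X then (1:ℝ) else 0) lst).sum / ((N:ℝ) * (TF:ℝ)),
    htend, ?_⟩
  intro l
  set F : Set L → ℝ := fun X => if l ∈ X then (1:ℝ) else 0 with hF
  set a : {x // x ∈ t} → ℝ := fun i => if l ∈ A' i then (1:ℝ) else 0 with ha
  have ha0 : ∀ i, 0 ≤ a i := by intro i; rw [ha]; positivity
  have ha1 : ∀ i, a i ≤ 1 := by
    intro i; rw [ha]; by_cases h : l ∈ A' i <;> simp [h]
  -- the limit value
  have hmap : (lst.map F).sum = ∑ i ∈ t.attach, (n i : ℝ) * a i := by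
    rw [hlst_def, List.map_flatMap]
    rw [show (fun i => (List.replicate (n i) (A' i)).map F)
        = fun i : {x // x ∈ t} => List.replicate (n i) (F (A' i)) from by
      funext i; simp]
    rw [List.flatMap_def, List.sum_flatten, List.map_map]
    rw [show (List.sum ∘ fun i : {x // x ∈ t} => List.replicate (n i) (F (A' i)))
        = fun i => (n i : ℝ) * a i from by
      funext i
      simp [List.sum_replicate, nsmul_eq_mul, ha, hF]]
    exact Finset.sum_map_toList _ _
  set X : ℝ := ∑ i ∈ t.attach, (n i : ℝ) * a i with hX
  -- R l as a sum
  have hRsum : R l = ∑ i ∈ t.attach, w i.1 * a i := by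
    have h1 : R = ∑ i ∈ t, w i • z i := by
      rw [← hcm, Finset.centerMass, hw1]
      simp
    have h2 : R l = ∑ i ∈ t, w i * z i l := by
      rw [h1, Finset.sum_apply]
      simp [Pi.smul_apply, smul_eq_mul]
    rw [h2, ← Finset.sum_attach t (fun i => w i * z i l)]
    apply Finset.sum_congr rfl
    intro i _
    congr 1
    rw [hA2 i.1 i.2]
    simp [indVec, ha, hA']
  have hfloor : ∀ i : {x // x ∈ t}, w i.1 * (N:ℝ) - 1 ≤ (n i : ℝ) := by
    intro i
    have := Nat.lt_floor_add_one (w i.1 * (N:ℝ))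
    rw [hn]
    push_cast
    linarith
  have hsa : ∑ i ∈ t.attach, a i ≤ (m:ℝ) := by
    calc ∑ i ∈ t.attach, a i ≤ ∑ i ∈ t.attach, (1:ℝ) :=
          Finset.sum_le_sum (fun i _ => ha1 i)
      _ = (m:ℝ) := by rw [Finset.sum_const, Finset.card_attach]; simp [hm]
  have h1 : (N:ℝ) * R l - m ≤ X := by
    have hA : ∑ i ∈ t.attach, (w i.1 * (N:ℝ) - 1) * a i ≤ X := by
      rw [hX]
      apply Finset.sum_le_sum
      intro i _
      nlinarith [hfloor i, ha0 i]
    have hB : ∑ i ∈ t.attach, (w i.1 * (N:ℝ) - 1) * a i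
        = (N:ℝ) * (∑ i ∈ t.attach, w i.1 * a i) - ∑ i ∈ t.attach, a i := by
      rw [Finset.mul_sum, ← Finset.sum_sub_distrib]
      apply Finset.sum_congr rfl
      intro i _
      ring
    rw [hRsum]
    rw [hB] at hA
    linarith
  have h2 : X ≤ (N:ℝ) := by
    calc X ≤ ∑ i ∈ t.attach, (n i : ℝ) := by
          rw [hX]
          apply Finset.sum_le_sum
          intro i _
          nlinarith [ha1 i, ha0 i, Nat.cast_nonneg (α := ℝ) (n i)]
      _ ≤ (N:ℝ) := by exact_mod_cast hsumn
  have h3 : 0 ≤ X := by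
    rw [hX]
    apply Finset.sum_nonneg
    intro i _
    exact mul_nonneg (Nat.cast_nonneg _) (ha0 i)
  -- arithmetic conclusion
  have hcast2 : ((TF - Dstar : ℕ) : ℝ) = (TF:ℝ) - Dstar := by
    push_cast [Nat.cast_sub (by omega : Dstar ≤ TF)]
    ring
  beta_reduce
  rw [hmap, hcast2]
  clear_value X N TF
  have hY1 : X / N ≤ 1 := by rw [div_le_one hNr]; exact h2
  have hY0 : 0 ≤ X / N := div_nonneg h3 hNr.le
  have hYlow : R l - (m:ℝ)/N ≤ X / N := by
    have e : R l - (m:ℝ)/N = ((N:ℝ) * R l - m)/N := by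
      field_simp
    rw [e]
    gcongr
  have hd : (Dstar:ℝ)/TF ≤ ε2 := by
    have hTc : ((Dstar:ℝ)/ε2) ≤ (TF:ℝ) := by
      calc ((Dstar:ℝ)/ε2) ≤ (⌈(Dstar:ℝ)/ε2⌉₊ : ℝ) := Nat.le_ceil _
        _ ≤ (TF:ℝ) := by rw [hTF]; exact_mod_cast le_max_right _ _
    rw [div_le_iff₀ hTFr]
    rw [div_le_iff₀ hε2pos] at hTc
    nlinarith
  have hd0 : 0 ≤ (Dstar:ℝ)/TF := by positivity
  have hmN : (m:ℝ)/N ≤ ε2 := by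
    have hTc : ((m:ℝ)/ε2) ≤ (N:ℝ) := by
      calc ((m:ℝ)/ε2) ≤ (⌈(m:ℝ)/ε2⌉₊ : ℝ) := Nat.le_ceil _
        _ ≤ (N:ℝ) := by rw [hN]; exact_mod_cast le_max_right _ _
    rw [div_le_iff₀ hNr]
    rw [div_le_iff₀ hε2pos] at hTc
    nlinarith
  rw [div_helper' (Dstar:ℝ) (N:ℝ) (TF:ℝ) X hNr hTFr]
  have hprod : ((Dstar:ℝ)/TF) * (X / N) ≤ ε2 := by nlinarith
  have hεe : ε = ε2 + ε2 := by rw [hε2]; ring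
  linarith [hYlow, hmN]
end

section
/- If S is a collision-free schedule of period K·T (so S[T, i+K] = S[T, i] for all i), then (S[T,0], S[T,1], ..., S[T,K]) is a closed path in the scheduling graph (M_T, E_T), and the rate vector R_S = (1/(KT)) Σ_{i=0}^{K−1} S[T,i]·𝟙 lies in the convex hull of the rate vectors of the cycles of (M_T, E_T). -/
/-- Vertex set of the scheduling graph. -/
def MT {L : Type*} (I : L → Set (Set L)) (D : L → L → ℤ) (T : ℕ) :
    Set (L → Fin T → Bool) :=
  {A | ∃ S, CollisionFree I D S ∧ A = blk S T 0}

/-- Edge set of the scheduling graph. -/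
def ET {L : Type*} (I : L → Set (Set L)) (D : L → L → ℤ) (T : ℕ) :
    Set ((L → Fin T → Bool) × (L → Fin T → Bool)) :=
  {p | ∃ S, CollisionFree I D S ∧ p.1 = blk S T 0 ∧ p.2 = blk S T 1}

/-- A cycle of length `k` in the scheduling graph: a closed path whose first
`k` vertices are pairwise distinct. -/
def IsCycle {L : Type*} (I : L → Set (Set L)) (D : L → L → ℤ) (T : ℕ)
    (k : ℕ) (C : ℕ → (L → Fin T → Bool)) : Prop :=
  1 ≤ k ∧ C k = C 0 ∧
  (∀ i < k, C i ∈ MT I D T ∧ (C i, C (i + 1)) ∈ ET I D T) ∧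
  (∀ i < k, ∀ j < k, C i = C j → i = j)

/-- Rate vector `R_C` of a closed path of length `k` in `(M_T, E_T)`. -/
noncomputable def cycRate {L : Type*} (T k : ℕ) (C : ℕ → (L → Fin T → Bool)) :
    L → ℝ :=
  fun l => (∑ i ∈ Finset.range k, ∑ j : Fin T,
      if C i l j then (1 : ℝ) else 0) / ((k : ℝ) * (T : ℝ))

lemma cf_shift {L : Type*} (I : L → Set (Set L)) (D : L → L → ℤ)
    (S : L → ℤ → Bool) (hcf : CollisionFree I D S) (c : ℤ) :
    CollisionFree I D (fun l t => S l (t + c)) := by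
  intro l t hlt φ hφ
  obtain ⟨l', hl', hf⟩ := hcf l (t + c) hlt φ hφ
  exact ⟨l', hl', by simpa [add_right_comm] using hf⟩

lemma blk_shift {L : Type*} (S : L → ℤ → Bool) (T : ℕ) (i m : ℤ) :
    blk S T (i + m) = blk (fun l t => S l (t + i * T)) T m := by
  funext l j
  show S l ((i + m) * T + (j : ℕ)) = S l (m * T + (j : ℕ) + i * T)
  congr 1; ring

lemma blk_mem_MT {L : Type*} (I : L → Set (Set L)) (D : L → L → ℤ) (T : ℕ)
    (S : L → ℤ → Bool) (hcf : CollisionFree I D S) (i : ℤ) :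
    blk S T i ∈ MT I D T :=
  ⟨fun l t => S l (t + i * T), cf_shift I D S hcf _, by
    simpa using blk_shift S T i 0⟩

lemma blk_mem_ET {L : Type*} (I : L → Set (Set L)) (D : L → L → ℤ) (T : ℕ)
    (S : L → ℤ → Bool) (hcf : CollisionFree I D S) (i : ℤ) :
    (blk S T i, blk S T (i + 1)) ∈ ET I D T :=
  ⟨fun l t => S l (t + i * T), cf_shift I D S hcf _, by
    simpa using blk_shift S T i 0, blk_shift S T i 1⟩

lemma closedPath_mem {L : Type*} (I : L → Set (Set L)) (D : L → L → ℤ)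
    (T : ℕ) (hT : 1 ≤ T) :
    ∀ k, 1 ≤ k → ∀ C : ℕ → (L → Fin T → Bool), C k = C 0 →
      (∀ i < k, C i ∈ MT I D T ∧ (C i, C (i + 1)) ∈ ET I D T) →
      cycRate T k C ∈ convexHull ℝ
        {R : L → ℝ | ∃ k' C', IsCycle I D T k' C' ∧ R = cycRate T k' C'} := by
  intro k
  induction k using Nat.strong_induction_on with
  | _ k IH =>
  intro hk C hclose hp
  by_cases hinj : ∀ i < k, ∀ j < k, C i = C j → i = j
  · exact subset_convexHull ℝ _ ⟨k, C, ⟨hk, hclose, hp, hinj⟩, rfl⟩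
  · have key : ∀ i j : ℕ, i < j → j < k → C i = C j →
        cycRate T k C ∈ convexHull ℝ
          {R : L → ℝ | ∃ k' C', IsCycle I D T k' C' ∧ R = cycRate T k' C'} := by
      intro i j hij hjk hCij
      set C1 : ℕ → (L → Fin T → Bool) := fun m => C (i + m) with hC1
      set C2 : ℕ → (L → Fin T → Bool) := fun m =>
        if m ≤ i then C m else C (m + (j - i)) with hC2
      -- closed path C1
      have hC1close : C1 (j - i) = C1 0 := by
        show C (i + (j - i)) = C (i + 0)
        have e : i + (j - i) = j := by omega
        rw [e]; simpa using hCij.symm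
      have hC1path : ∀ m < j - i, C1 m ∈ MT I D T ∧ (C1 m, C1 (m + 1)) ∈ ET I D T := by
        intro m hm
        exact hp (i + m) (by omega)
      -- closed path C2
      have hC2close : C2 (k - (j - i)) = C2 0 := by
        show (if k - (j - i) ≤ i then C (k - (j - i)) else C (k - (j - i) + (j - i)))
          = (if 0 ≤ i then C 0 else _)
        rw [if_neg (by omega), if_pos (by omega)]
        have e : k - (j - i) + (j - i) = k := by omega
        rw [e, hclose]
      have hC2path : ∀ m < k - (j - i),
          C2 m ∈ MT I D T ∧ (C2 m, C2 (m + 1)) ∈ ET I D T := by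
        intro m hm
        rcases lt_trichotomy m i with h | h | h
        · have e1 : C2 m = C m := if_pos (by omega)
          have e2 : C2 (m + 1) = C (m + 1) := if_pos (by omega)
          rw [e1, e2]; exact hp m (by omega)
        · have e1 : C2 m = C j := by
            show (if m ≤ i then C m else C (m + (j - i))) = C j
            rw [if_pos (by omega), h, hCij]
          have eidx : m + 1 + (j - i) = j + 1 := by omega
          have e2 : C2 (m + 1) = C (j + 1) := by
            show (if m + 1 ≤ i then C (m + 1) else C (m + 1 + (j - i))) = C (j + 1)
            rw [if_neg (by omega), eidx]
          rw [e1, e2]; exact hp j hjk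
        · have e1 : C2 m = C (m + (j - i)) := if_neg (by omega)
          have eidx : m + 1 + (j - i) = m + (j - i) + 1 := by omega
          have e2 : C2 (m + 1) = C (m + (j - i) + 1) := by
            show (if m + 1 ≤ i then C (m + 1) else C (m + 1 + (j - i)))
              = C (m + (j - i) + 1)
            rw [if_neg (by omega), eidx]
          rw [e1, e2]; exact hp (m + (j - i)) (by omega)
      have h1 := IH (j - i) (by omega) (by omega) C1 hC1close hC1path
      have h2 := IH (k - (j - i)) (by omega) (by omega) C2 hC2close hC2path
      -- sum decomposition
      have hsum : ∀ g : (L → Fin T → Bool) → ℝ,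
          ∑ m ∈ Finset.range k, g (C m)
            = ∑ m ∈ Finset.range (j - i), g (C1 m)
              + ∑ m ∈ Finset.range (k - (j - i)), g (C2 m) := by
        intro g
        have e1 : ∑ m ∈ Finset.range (j - i), g (C1 m)
            = ∑ m ∈ Finset.Ico i j, g (C m) := by
          rw [Finset.sum_Ico_eq_sum_range]
        have e2 : ∑ m ∈ Finset.range (k - (j - i)), g (C2 m)
            = ∑ m ∈ Finset.range (i + 1), g (C m)
              + ∑ m ∈ Finset.Ico (j + 1) k, g (C m) := by
          rw [Finset.range_eq_Ico,
            ← Finset.sum_Ico_consecutive _ (Nat.zero_le (i + 1))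
              (by omega : i + 1 ≤ k - (j - i))]
          congr 1
          · refine Finset.sum_congr (Finset.range_eq_Ico _).symm fun m hm => ?_
            simp only [Finset.mem_range] at hm
            have e' : C2 m = C m := if_pos (by omega)
            rw [e']
          · rw [Finset.sum_Ico_eq_sum_range, Finset.sum_Ico_eq_sum_range]
            have ek : k - (j - i) - (i + 1) = k - (j + 1) := by omega
            rw [ek]
            refine Finset.sum_congr rfl fun m hm => ?_
            have e' : C2 (i + 1 + m) = C (j + 1 + m) := by
              have eidx : i + 1 + m + (j - i) = j + 1 + m := by omega
              show (if i + 1 + m ≤ i then C (i + 1 + m)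
                else C (i + 1 + m + (j - i))) = C (j + 1 + m)
              rw [if_neg (by omega), eidx]
            rw [e']
        rw [e1, e2]
        have e3 : ∑ m ∈ Finset.range (i + 1), g (C m)
            = ∑ m ∈ Finset.range i, g (C m) + g (C j) := by
          rw [Finset.sum_range_succ, hCij]
        have e4 : ∑ m ∈ Finset.Ico j k, g (C m)
            = g (C j) + ∑ m ∈ Finset.Ico (j + 1) k, g (C m) := by
          rw [Finset.sum_eq_sum_Ico_succ_bot hjk]
        calc ∑ m ∈ Finset.range k, g (C m)
            = ∑ m ∈ Finset.range i, g (C m) + ∑ m ∈ Finset.Ico i j, g (C m)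
              + ∑ m ∈ Finset.Ico j k, g (C m) := by
              rw [Finset.range_eq_Ico, Finset.range_eq_Ico,
                Finset.sum_Ico_consecutive _ (Nat.zero_le i) (le_of_lt hij),
                Finset.sum_Ico_consecutive _ (by omega : (0:ℕ) ≤ j) (le_of_lt hjk)]
          _ = _ := by rw [e3, e4]; ring
      -- convex combination
      have hk0 : (k : ℝ) ≠ 0 := Nat.cast_ne_zero.mpr (by omega)
      have hT0 : (T : ℝ) ≠ 0 := Nat.cast_ne_zero.mpr (by omega)
      have hk10 : ((j - i : ℕ) : ℝ) ≠ 0 := Nat.cast_ne_zero.mpr (by omega)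
      have hk20 : ((k - (j - i) : ℕ) : ℝ) ≠ 0 := Nat.cast_ne_zero.mpr (by omega)
      have ha : (0 : ℝ) ≤ ((j - i : ℕ) : ℝ) / k := by positivity
      have hb : (0 : ℝ) ≤ ((k - (j - i) : ℕ) : ℝ) / k := by positivity
      have hab : ((j - i : ℕ) : ℝ) / k + ((k - (j - i) : ℕ) : ℝ) / k = 1 := by
        rw [← add_div, ← Nat.cast_add]
        have e : (j - i) + (k - (j - i)) = k := by omega
        rw [e, div_self hk0]
      have hcomb : cycRate T k C
          = (((j - i : ℕ) : ℝ) / k) • cycRate T (j - i) C1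
            + (((k - (j - i) : ℕ) : ℝ) / k) • cycRate T (k - (j - i)) C2 := by
        funext l
        have hs := hsum (fun A => ∑ j' : Fin T, if A l j' then (1 : ℝ) else 0)
        simp only [Pi.add_apply, Pi.smul_apply, smul_eq_mul, cycRate]
        rw [hs]
        field_simp
      rw [hcomb]
      exact (convex_convexHull ℝ _) h1 h2 ha hb hab
    push_neg at hinj
    obtain ⟨i, hi, j, hj, hCij, hne⟩ := hinj
    rcases lt_or_gt_of_ne hne with h | h
    · exact key i j h hj hCij
    · exact key j i h hi hCij.symm

/-- a collision-free schedule `S` of period `K·T` yields a closed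
path `(S[T,0], …, S[T,K])` in `(M_T, E_T)`, and its rate vector lies in the
convex hull of the rate vectors of the cycles of `(M_T, E_T)`. -/
theorem stmt_12 {L : Type*} (I : L → Set (Set L)) (D : L → L → ℤ)
    (T K : ℕ) (hT : 1 ≤ T) (hK : 1 ≤ K)
    (S : L → ℤ → Bool) (hcf : CollisionFree I D S)
    (hper : ∀ l t, S l (t + ((K * T : ℕ) : ℤ)) = S l t) :
    ((∀ i < K, blk S T (i : ℤ) ∈ MT I D T ∧
        (blk S T (i : ℤ), blk S T ((i : ℤ) + 1)) ∈ ET I D T) ∧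
      blk S T (K : ℤ) = blk S T 0) ∧
    cycRate T K (fun i : ℕ => blk S T (i : ℤ)) ∈
      convexHull ℝ {R : L → ℝ | ∃ k C, IsCycle I D T k C ∧ R = cycRate T k C} := by
  have hcl : blk S T (K : ℤ) = blk S T 0 := by
    funext l j
    show S l ((K : ℤ) * T + (j : ℕ)) = S l (0 * T + (j : ℕ))
    have e1 : ((K : ℤ) * T + (j : ℕ)) = ((j : ℕ) + ((K * T : ℕ) : ℤ)) := by
      push_cast; ring
    have e2 : ((0 : ℤ) * T + (j : ℕ)) = ((j : ℕ) : ℤ) := by ring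
    rw [e1, e2, hper l (j : ℕ)]
  refine ⟨⟨fun i _ => ⟨blk_mem_MT I D T S hcf i, blk_mem_ET I D T S hcf i⟩, hcl⟩, ?_⟩
  refine closedPath_mem I D T hT K hK (fun i : ℕ => blk S T (i : ℤ)) hcl ?_
  intro i _
  refine ⟨blk_mem_MT I D T S hcf i, ?_⟩
  have e : ((i + 1 : ℕ) : ℤ) = (i : ℤ) + 1 := by push_cast; ring
  show (blk S T (i : ℤ), blk S T ((i + 1 : ℕ) : ℤ)) ∈ ET I D T
  rw [e]
  exact blk_mem_ET I D T S hcf i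
end
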